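/- arXiv:1610.00636 — 7 statements merged into one kernel-verified Lean document; each statement's English description precedes it below -/
import Mathlib

section
/- If G is a non-complete, double-critical, t-chromatic graph, then for any vertex x that has at least one non-neighbor in G, the chromatic number of the subgraph of G induced on the vertices outside the closed neighborhood of x is at least 3. -/
open SimpleGraph

def DoubleCritical {V : Type*} (G : SimpleGraph V) (t : ℕ) : Prop :=
  G.Connected ∧ G.chromaticNumber = (t : ℕ∞) ∧
    ∀ x y : V, G.Adj x y →
      (G.induce ({x, y}ᶜ : Set V)).chromaticNumber = (t : ℕ∞) - 2

def ClawFree {V : Type*} (G : SimpleGraph V) : Prop :=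
  ∀ x a b c : V, a ≠ b → a ≠ c → b ≠ c →
    G.Adj x a → G.Adj x b → G.Adj x c →
    G.Adj a b ∨ G.Adj a c ∨ G.Adj b c

lemma fin2_cases {i j : Fin 2} (h : i ≠ j) : (i = 0 ∧ j ≠ 0) ∨ (i ≠ 0 ∧ j = 0) := by
  fin_cases i <;> fin_cases j <;> simp_all

theorem stmt_1 {V : Type*} (G : SimpleGraph V) (t : ℕ)
    (hG : DoubleCritical G t) (hnc : G ≠ ⊤)
    (x : V) (hx : ∃ y : V, y ≠ x ∧ ¬ G.Adj x y) :
    3 ≤ (G.induce ((insert x (G.neighborSet x))ᶜ : Set V)).chromaticNumber := by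
  classical
  obtain ⟨hconn, hchi, hdc⟩ := hG
  obtain ⟨y0, hy0x, hy0adj⟩ := hx
  set A : Set V := (insert x (G.neighborSet x))ᶜ with hA
  have hxA : x ∉ A := by simp [hA]
  have hy0A : y0 ∈ A := by simp [hA, hy0adj, hy0x]
  have hnadj : ∀ w ∈ A, ¬ G.Adj x w := by
    intro w hw
    simp only [hA, Set.mem_compl_iff, Set.mem_insert_iff, mem_neighborSet] at hw
    exact fun h => hw (Or.inr h)
  -- x has a neighbor
  have hz0 : ∃ z, G.Adj x z := by
    obtain ⟨w⟩ := hconn.preconnected x y0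
    cases w with
    | nil => exact absurd rfl hy0x
    | cons h p => exact ⟨_, h⟩
  obtain ⟨z0, hz0⟩ := hz0
  have hcolt : G.Colorable t := by
    rw [← chromaticNumber_le_iff_colorable, hchi]
  have ht2 : 2 ≤ t := by
    by_contra h
    obtain ⟨c⟩ := hcolt.mono (show t ≤ 1 by omega)
    exact (c.valid hz0) (Subsingleton.elim _ _)
  -- key contradiction builder
  have key : ∀ (φ : V → Option (Fin (t - 2))), (∀ a b, G.Adj a b → φ a ≠ φ b) → False := by
    intro φ hφ
    have hcol : G.Colorable (t - 2 + 1) := by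
      have C : G.Coloring (Option (Fin (t - 2))) := Coloring.mk φ (fun {a b} h => hφ a b h)
      simpa using C.colorable
    have hle : G.chromaticNumber ≤ ((t - 2 + 1 : ℕ) : ℕ∞) :=
      chromaticNumber_le_iff_colorable.mpr hcol
    rw [hchi, Nat.cast_le] at hle
    omega
  -- extraction of (t-2)-colorings from double-criticality
  have getc : ∀ a b : V, G.Adj a b →
      (G.induce ({a, b}ᶜ : Set V)).Colorable (t - 2) := by
    intro a b hab
    rw [← chromaticNumber_le_iff_colorable, hdc a b hab]
    have : ((t - 2 : ℕ) : ℕ∞) = (t : ℕ∞) - 2 := by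
      rw [ENat.coe_sub]; norm_num
    rw [this]
  by_contra h3
  have h2 : (G.induce A).Colorable 2 := by
    rw [← chromaticNumber_le_iff_colorable]
    have hlt : (G.induce A).chromaticNumber < 3 := lt_of_not_ge h3
    have h31 : ((2 : ℕ) : ℕ∞) + 1 = 3 := by norm_num
    exact (ENat.lt_add_one_iff (by norm_num)).mp (h31 ▸ hlt)
  obtain ⟨f⟩ := h2
  by_cases hin : ∃ a b, a ∈ A ∧ b ∈ A ∧ G.Adj a b
  · -- Case: edge inside A
    obtain ⟨a, b, ha, hb, hab⟩ := hin
    obtain ⟨c⟩ := getc a b hab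
    have hS : ∀ v : V, v ∉ A → v ∈ ({a, b}ᶜ : Set V) := by
      intro v hv
      simp only [Set.mem_compl_iff, Set.mem_insert_iff, Set.mem_singleton_iff]
      rintro (rfl | rfl) <;> exact hv ‹_›
    have hxS : x ∈ ({a, b}ᶜ : Set V) := hS x hxA
    set cx := c ⟨x, hxS⟩ with hcx
    set φ : V → Option (Fin (t - 2)) := fun v =>
      if hv : v ∈ A then (if f ⟨v, hv⟩ = 0 then some cx else none)
      else some (c ⟨v, hS v hv⟩) with hφ
    refine key φ ?_
    -- helper for mixed case
    have mixed : ∀ u v : V, (hu : u ∈ A) → (hv : v ∉ A) → G.Adj u v →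
        φ u ≠ φ v := by
      intro u v hu hv huv
      have hvx : v ≠ x := by rintro rfl; exact hnadj u hu huv.symm
      have hvN : G.Adj x v := by
        by_contra hcon
        exact hv (by simp [hA, hvx, hcon])
      have hne : cx ≠ c ⟨v, hS v hv⟩ := c.valid hvN
      simp only [hφ, dif_pos hu, dif_neg hv]
      by_cases h0 : f ⟨u, hu⟩ = 0 <;> simp [h0, hne]
    intro u v huv
    by_cases hu : u ∈ A <;> by_cases hv : v ∈ A
    · -- both in A
      have hne : f ⟨u, hu⟩ ≠ f ⟨v, hv⟩ := f.valid huv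
      simp only [hφ, dif_pos hu, dif_pos hv]
      rcases fin2_cases hne with ⟨h1, h2⟩ | ⟨h1, h2⟩ <;> simp [h1, h2]
    · exact mixed u v hu hv huv
    · exact (mixed v u hv hu huv.symm).symm
    · have hne : c ⟨u, hS u hu⟩ ≠ c ⟨v, hS v hv⟩ := c.valid huv
      simp only [hφ, dif_neg hu, dif_neg hv]
      simpa using hne
  · -- Case: A independent
    push_neg at hin
    by_cases hcross : ∃ z w, z ∉ A ∧ w ∈ A ∧ G.Adj z w
    · obtain ⟨z, w, hzA, hwA, hzw⟩ := hcross
      have hzx : z ≠ x := by rintro rfl; exact hnadj w hwA hzw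
      obtain ⟨c⟩ := getc z w hzw
      have hS : ∀ v : V, v ≠ z → v ∉ A → v ∈ ({z, w}ᶜ : Set V) := by
        intro v hvz hv
        simp only [Set.mem_compl_iff, Set.mem_insert_iff, Set.mem_singleton_iff]
        rintro (rfl | rfl)
        · exact hvz rfl
        · exact hv hwA
      have hxz : x ≠ z := fun h => hzx h.symm
      have hxS : x ∈ ({z, w}ᶜ : Set V) := hS x hxz hxA
      set cx := c ⟨x, hxS⟩ with hcx
      set φ : V → Option (Fin (t - 2)) := fun v =>
        if hvz : v = z then none
        else if hv : v ∈ A then some cx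
        else some (c ⟨v, hS v hvz hv⟩) with hφ
      refine key φ ?_
      have mixed : ∀ u v : V, (hu : u ∈ A) → v ≠ z → (hv : v ∉ A) → G.Adj u v →
          φ u ≠ φ v := by
        intro u v hu hvz hv huv
        have huz : u ≠ z := by rintro rfl; exact hzA hu
        have hvx : v ≠ x := by rintro rfl; exact hnadj u hu huv.symm
        have hvN : G.Adj x v := by
          by_contra hcon
          exact hv (by simp [hA, hvx, hcon])
        have hne : cx ≠ c ⟨v, hS v hvz hv⟩ := c.valid hvN
        simp only [hφ, dif_neg huz, dif_neg hvz, dif_pos hu, dif_neg hv]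
        simpa using hne
      intro u v huv
      by_cases huz : u = z
      · have hvz : v ≠ z := by
          rintro rfl; rw [huz] at huv; exact G.loopless.irrefl v huv
        simp only [hφ]
        rw [dif_pos huz, dif_neg hvz]
        by_cases hv : v ∈ A <;> simp [hv]
      · by_cases hvz : v = z
        · simp only [hφ]
          rw [dif_pos hvz, dif_neg huz]
          by_cases hu : u ∈ A <;> simp [hu]
        · by_cases hu : u ∈ A <;> by_cases hv : v ∈ A
          · exact absurd huv (hin u v hu hv)
          · exact mixed u v hu hvz hv huv
          · exact (mixed v u hv huz hu huv.symm).symm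
          · have hne : c ⟨u, hS u huz hu⟩ ≠ c ⟨v, hS v hvz hv⟩ := c.valid huv
            simp only [hφ, dif_neg huz, dif_neg hvz, dif_neg hu, dif_neg hv]
            simpa using hne
    · -- no crossing edge and A independent ⇒ y0 isolated, contradicting connectivity
      push_neg at hcross
      obtain ⟨wlk⟩ := hconn.preconnected y0 x
      cases wlk with
      | nil => exact hy0x rfl
      | cons h p =>
        rename_i u
        by_cases hu : u ∈ A
        · exact hin y0 u hy0A hu h
        · exact hcross u y0 hu hy0A h.symm
end

section
/- If G is a non-complete, double-critical, t-chromatic graph, then for any vertex x with at least one non-neighbor in G, the subgraph of G induced on V(G) \ N[x] contains an odd cycle, and consequently the degree of x is at most |V(G)| - 4. -/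
open SimpleGraph

lemma aux_split {V : Type*} {H : SimpleGraph V} [DecidableEq V] :
    ∀ {a b : V} (p : H.Walk a b), ¬ p.support.Nodup →
    ∃ (w : V) (c : H.Walk w w) (r1 : H.Walk a w) (r2 : H.Walk w b),
      0 < c.length ∧ r1.length + c.length + r2.length = p.length := by
  intro a b p
  induction p with
  | nil => intro h; simp [Walk.support_nil] at h
  | @cons a d b h rest ih =>
    intro hnd
    rw [Walk.support_cons, List.nodup_cons] at hnd
    by_cases ha : a ∈ rest.support
    · refine ⟨a, Walk.cons h (rest.takeUntil a ha), Walk.nil, rest.dropUntil a ha, ?_, ?_⟩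
      · simp [Walk.length_cons]
      · have hts := congrArg Walk.length (rest.take_spec ha)
        rw [Walk.length_append] at hts
        simp only [Walk.length_nil, Walk.length_cons]
        omega
    · have hr : ¬ rest.support.Nodup := fun hn => hnd ⟨ha, hn⟩
      obtain ⟨w, c, r1, r2, hc, hlen⟩ := ih hr
      exact ⟨w, c, Walk.cons h r1, r2, hc, by simp only [Walk.length_cons]; omega⟩

lemma aux_lastedge {V : Type*} {H : SimpleGraph V} :
    ∀ {a b c : V} (p : H.Walk a b), p.IsPath → s(c, b) ∈ p.edges →
    ∃ (p' : H.Walk a c), p'.length + 1 = p.length := by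
  intro a b c p
  induction p with
  | nil => intro _ h; simp at h
  | @cons a d b h rest ih =>
    intro hp he
    rw [Walk.edges_cons, List.mem_cons] at he
    have hp' := (Walk.cons_isPath_iff h rest).mp hp
    rcases he with he | he
    · rw [Sym2.eq_iff] at he
      rcases he with ⟨hca, hbd⟩ | ⟨hcd, hba⟩
      · subst hca
        subst hbd
        cases rest with
        | nil => exact ⟨Walk.nil, by simp⟩
        | @cons _ e _ h' r' =>
          exfalso
          have h2 := (Walk.cons_isPath_iff h' r').mp hp'.1
          exact h2.2 (r'.end_mem_support)
      · exfalso
        subst hba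
        exact hp'.2 (rest.end_mem_support)
    · obtain ⟨p'', hl⟩ := ih hp'.1 he
      exact ⟨Walk.cons h p'', by simp only [Walk.length_cons]; omega⟩

lemma aux_odd_closed_to_cycle {V : Type*} {H : SimpleGraph V} [DecidableEq V] :
    ∀ (n : ℕ) {u : V} (p : H.Walk u u), p.length = n → Odd n →
    ∃ (v : V) (c : H.Walk v v), c.IsCycle ∧ Odd c.length := by
  intro n
  induction n using Nat.strong_induction_on with
  | _ n ih =>
    intro u p hlen hodd
    rw [Nat.odd_iff] at hodd
    cases p with
    | nil => rw [Walk.length_nil] at hlen; omega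
    | @cons _ v _ h rest =>
      rw [Walk.length_cons] at hlen
      by_cases hpath : rest.IsPath
      · by_cases hedge : s(u, v) ∈ rest.edges
        · have he' : s(v, u) ∈ rest.edges := by rwa [Sym2.eq_swap] at hedge
          obtain ⟨p', hl⟩ := aux_lastedge rest hpath he'
          exact ih p'.length (by omega) p' rfl (by rw [Nat.odd_iff]; omega)
        · exact ⟨u, Walk.cons h rest,
            (Walk.cons_isCycle_iff rest h).mpr ⟨hpath, hedge⟩,
            by rw [Nat.odd_iff, Walk.length_cons]; omega⟩
      · have hnd : ¬ rest.support.Nodup := fun hn => hpath ((Walk.isPath_def rest).mpr hn)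
        obtain ⟨w, c, r1, r2, hc, hsum⟩ := aux_split rest hnd
        rcases Nat.even_or_odd c.length with hev | hodd'
        · refine ih (Walk.cons h (r1.append r2)).length ?_ _ rfl ?_
          · simp only [Walk.length_cons, Walk.length_append]; omega
          · rw [Nat.even_iff] at hev
            rw [Nat.odd_iff]
            simp only [Walk.length_cons, Walk.length_append]
            omega
        · exact ih c.length (by omega) c rfl hodd'

lemma aux_two_colorable {V : Type*} {H : SimpleGraph V}
    (h : ∀ (v : V) (c : H.Walk v v), ¬ Odd c.length) : H.Colorable 2 := by
  classical
  have hrep : ∀ v : V, H.Reachable ((H.connectedComponentMk v).out) v := by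
    intro v
    apply ConnectedComponent.exact
    show H.connectedComponentMk _ = H.connectedComponentMk v
    exact Quot.out_eq _
  set W : ∀ v : V, H.Walk ((H.connectedComponentMk v).out) v := fun v => (hrep v).some with hW
  refine (colorable_iff_exists_bdd_nat_coloring 2).mpr
    ⟨Coloring.mk (fun v => (W v).length % 2) ?_, fun v => Nat.mod_lt _ (by norm_num)⟩
  intro a b hab heq
  have heq' : (W a).length % 2 = (W b).length % 2 := heq
  have hcomp : H.connectedComponentMk a = H.connectedComponentMk b :=
    ConnectedComponent.sound hab.reachable
  have hout : (H.connectedComponentMk b).out = (H.connectedComponentMk a).out := by rw [hcomp]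
  set Wb : H.Walk ((H.connectedComponentMk a).out) b := (W b).copy hout rfl with hWb
  apply h _ ((W a).append ((hab.toWalk).append Wb.reverse))
  have hlb : Wb.length = (W b).length := Walk.length_copy _ _ _
  rw [Nat.odd_iff]
  simp only [Walk.length_append, Walk.length_reverse, Walk.length_cons,
    Walk.length_nil, Adj.toWalk, hlb]
  omega

lemma aux_odd_cycle {V : Type*} {H : SimpleGraph V} (h : ¬ H.Colorable 2) :
    ∃ (v : V) (c : H.Walk v v), c.IsCycle ∧ Odd c.length := by
  classical
  by_contra hno
  push_neg at hno
  refine h (aux_two_colorable ?_)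
  intro v c hodd
  obtain ⟨w, d, hd, hod⟩ := aux_odd_closed_to_cycle c.length c rfl hodd
  exact (hno w d hd) hod

theorem stmt_2 {V : Type*} [Fintype V] (G : SimpleGraph V) [DecidableRel G.Adj] (t : ℕ)
    (hG : DoubleCritical G t) (hnc : G ≠ ⊤)
    (x : V) (hx : ∃ y : V, y ≠ x ∧ ¬ G.Adj x y) :
    (∃ (v : ((insert x (G.neighborSet x))ᶜ : Set V))
       (c : (G.induce ((insert x (G.neighborSet x))ᶜ : Set V)).Walk v v),
         c.IsCycle ∧ Odd c.length) ∧
    G.degree x ≤ Fintype.card V - 4 := by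
  classical
  obtain ⟨hconn, hchi, hdc⟩ := hG
  obtain ⟨y, hyx, hxy⟩ := hx
  set A : Set V := (insert x (G.neighborSet x))ᶜ with hA
  have hmemA : ∀ w : V, w ∈ A ↔ (w ≠ x ∧ ¬ G.Adj x w) := by
    intro w
    simp only [hA, Set.mem_compl_iff, Set.mem_insert_iff, mem_neighborSet]
    tauto
  have hyA : y ∈ A := (hmemA y).mpr ⟨hyx, hxy⟩
  have hadjx : ∀ q : V, q ∉ A → q ≠ x → G.Adj x q := by
    intro q hq hqx
    by_contra hno
    exact hq ((hmemA q).mpr ⟨hqx, hno⟩)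
  have hedge : ∃ a b : V, G.Adj a b := by
    obtain ⟨p⟩ := hconn.preconnected y x
    cases p with
    | nil => exact absurd rfl hyx
    | cons h _ => exact ⟨_, _, h⟩
  have ht2 : 2 ≤ t := by
    by_contra hlt
    push_neg at hlt
    have hcol : G.Colorable 1 := by
      rw [← chromaticNumber_le_iff_colorable, hchi]
      exact_mod_cast Nat.cast_le.mpr (by omega : t ≤ 1)
    obtain ⟨a, b, hab⟩ := hedge
    obtain ⟨C⟩ := hcol
    exact C.valid hab (Subsingleton.elim _ _)
  have hind : ∀ u v : V, G.Adj u v →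
      ∃ c : (G.induce ({u, v}ᶜ : Set V)).Coloring ℕ, ∀ w, c w < t - 2 := by
    intro u v huv
    have h1 := hdc u v huv
    have h2 : (t : ℕ∞) - 2 = ((t - 2 : ℕ) : ℕ∞) := by
      rw [ENat.coe_sub]; norm_num
    have h3 : (G.induce ({u, v}ᶜ : Set V)).chromaticNumber ≤ ((t - 2 : ℕ) : ℕ∞) :=
      le_of_eq (h1.trans h2)
    exact (colorable_iff_exists_bdd_nat_coloring _).mp (chromaticNumber_le_iff_colorable.mp h3)
  have hkey : ¬ (G.induce A).Colorable 2 := by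
    intro h2col
    obtain ⟨C2, hC2⟩ := (colorable_iff_exists_bdd_nat_coloring 2).mp h2col
    have hcolG : G.Colorable (t - 1) := by
      by_cases hE : ∃ u v : V, u ∈ A ∧ v ∈ A ∧ G.Adj u v
      · obtain ⟨u, v, huA, hvA, huv⟩ := hE
        obtain ⟨c, hc⟩ := hind u v huv
        have hxs : x ∈ ({u, v}ᶜ : Set V) := by
          simp only [Set.mem_compl_iff, Set.mem_insert_iff, Set.mem_singleton_iff]
          push_neg
          exact ⟨((hmemA u).mp huA).1.symm, ((hmemA v).mp hvA).1.symm⟩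
        have hs_of : ∀ w : V, w ∉ A → w ∈ ({u, v}ᶜ : Set V) := by
          intro w hw
          simp only [Set.mem_compl_iff, Set.mem_insert_iff, Set.mem_singleton_iff]
          push_neg
          constructor
          · rintro rfl; exact hw huA
          · rintro rfl; exact hw hvA
        refine (colorable_iff_exists_bdd_nat_coloring _).mpr
          ⟨Coloring.mk (fun w => if hw : w ∈ A then
              (if C2 ⟨w, hw⟩ = C2 ⟨u, huA⟩ then c ⟨x, hxs⟩ else t - 2)
            else c ⟨w, hs_of w hw⟩) ?_, ?_⟩
        · intro a b hab
          by_cases haA : a ∈ A <;> by_cases hbA : b ∈ A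
          · rw [dif_pos haA, dif_pos hbA]
            have hadj2 : (G.induce A).Adj ⟨a, haA⟩ ⟨b, hbA⟩ := hab
            have hne := C2.valid hadj2
            have h2a := hC2 ⟨a, haA⟩
            have h2b := hC2 ⟨b, hbA⟩
            have h2u := hC2 ⟨u, huA⟩
            have hcx := hc ⟨x, hxs⟩
            split_ifs with h1 h2 <;> omega
          · rw [dif_pos haA, dif_neg hbA]
            have hbx : b ≠ x := fun hbx => ((hmemA a).mp haA).2 (hbx ▸ hab).symm
            have hxb : G.Adj x b := hadjx b hbA hbx
            have hval : c ⟨x, hxs⟩ ≠ c ⟨b, hs_of b hbA⟩ := c.valid hxb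
            have hcb := hc ⟨b, hs_of b hbA⟩
            have hcx := hc ⟨x, hxs⟩
            split_ifs with h1 <;> omega
          · rw [dif_neg haA, dif_pos hbA]
            have hax : a ≠ x := fun h => ((hmemA b).mp hbA).2 (h ▸ hab)
            have hxa : G.Adj x a := hadjx a haA hax
            have hval : c ⟨x, hxs⟩ ≠ c ⟨a, hs_of a haA⟩ := c.valid hxa
            have hca := hc ⟨a, hs_of a haA⟩
            have hcx := hc ⟨x, hxs⟩
            split_ifs with h1 <;> omega
          · rw [dif_neg haA, dif_neg hbA]
            exact c.valid hab
        · intro w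
          show (if hw : w ∈ A then
              (if C2 ⟨w, hw⟩ = C2 ⟨u, huA⟩ then c ⟨x, hxs⟩ else t - 2)
            else c ⟨w, hs_of w hw⟩) < t - 1
          split_ifs with h1 h2
          · have := hc ⟨x, hxs⟩; omega
          · omega
          · have := hc ⟨w, hs_of w h1⟩; omega
      · push_neg at hE
        obtain ⟨z, hyz⟩ : ∃ z, G.Adj y z := by
          obtain ⟨p⟩ := hconn.preconnected y x
          cases p with
          | nil => exact absurd rfl hyx
          | cons h _ => exact ⟨_, h⟩
        have hzA : z ∉ A := fun hzA => hE y z hyA hzA hyz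
        have hzx : z ≠ x := by rintro rfl; exact hxy hyz.symm
        have hxz : G.Adj x z := hadjx z hzA hzx
        obtain ⟨c, hc⟩ := hind y z hyz
        have hxs : x ∈ ({y, z}ᶜ : Set V) := by
          simp only [Set.mem_compl_iff, Set.mem_insert_iff, Set.mem_singleton_iff]
          push_neg
          exact ⟨hyx.symm, hxz.ne⟩
        have hs_of : ∀ w : V, w ∉ A → w ≠ z → w ∈ ({y, z}ᶜ : Set V) := by
          intro w hw hwz
          simp only [Set.mem_compl_iff, Set.mem_insert_iff, Set.mem_singleton_iff]
          push_neg
          exact ⟨fun h => hw (h ▸ hyA), hwz⟩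
        refine (colorable_iff_exists_bdd_nat_coloring _).mpr
          ⟨Coloring.mk (fun w => if hw : w ∈ A then c ⟨x, hxs⟩
              else if hwz : w = z then t - 2 else c ⟨w, hs_of w hw hwz⟩) ?_, ?_⟩
        · intro a b hab
          by_cases haA : a ∈ A <;> by_cases hbA : b ∈ A
          · exact absurd hab (hE a b haA hbA)
          · rw [dif_pos haA, dif_neg hbA]
            have hbx : b ≠ x := fun hbx => ((hmemA a).mp haA).2 (hbx ▸ hab).symm
            by_cases hbz : b = z
            · rw [dif_pos hbz]
              have := hc ⟨x, hxs⟩; omega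
            · rw [dif_neg hbz]
              exact c.valid (hadjx b hbA hbx)
          · rw [dif_neg haA, dif_pos hbA]
            have hax : a ≠ x := fun h => ((hmemA b).mp hbA).2 (h ▸ hab)
            by_cases haz : a = z
            · rw [dif_pos haz]
              have := hc ⟨x, hxs⟩; omega
            · rw [dif_neg haz]
              have hval : c ⟨x, hxs⟩ ≠ c ⟨a, hs_of a haA haz⟩ := c.valid (hadjx a haA hax)
              exact hval.symm
          · rw [dif_neg haA, dif_neg hbA]
            by_cases haz : a = z <;> by_cases hbz : b = z
            · exact absurd (haz.trans hbz.symm) hab.ne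
            · rw [dif_pos haz, dif_neg hbz]
              have := hc ⟨b, hs_of b hbA hbz⟩; omega
            · rw [dif_neg haz, dif_pos hbz]
              have := hc ⟨a, hs_of a haA haz⟩; omega
            · rw [dif_neg haz, dif_neg hbz]
              exact c.valid hab
        · intro w
          show (if hw : w ∈ A then c ⟨x, hxs⟩
              else if hwz : w = z then t - 2 else c ⟨w, hs_of w hw hwz⟩) < t - 1
          split_ifs with h1 h2
          · have := hc ⟨x, hxs⟩; omega
          · omega
          · have := hc ⟨w, hs_of w h1 h2⟩; omega
    have hle : G.chromaticNumber ≤ ((t - 1 : ℕ) : ℕ∞) := hcolG.chromaticNumber_le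
    rw [hchi] at hle
    have hcontra : t ≤ t - 1 := by exact_mod_cast hle
    omega
  obtain ⟨v, cyc, hcyc, hoddc⟩ := aux_odd_cycle hkey
  refine ⟨⟨v, cyc, hcyc, hoddc⟩, ?_⟩
  have h3 : 3 ≤ cyc.length := hcyc.three_le_length
  have hnodup : cyc.support.tail.Nodup := hcyc.2
  have hLnd : (cyc.support.tail.map Subtype.val).Nodup := hnodup.map Subtype.val_injective
  have hLlen : (cyc.support.tail.map Subtype.val).length = cyc.length := by
    simp only [List.length_map, List.length_tail, Walk.length_support]
    omega
  have hTcard : (cyc.support.tail.map Subtype.val).toFinset.card = cyc.length := by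
    rw [List.toFinset_card_of_nodup hLnd, hLlen]
  have hBcard : (insert x (G.neighborFinset x)).card = G.degree x + 1 := by
    rw [Finset.card_insert_of_notMem (by simp), card_neighborFinset_eq_degree]
  have hdisj : Disjoint (cyc.support.tail.map Subtype.val).toFinset
      (insert x (G.neighborFinset x)) := by
    rw [Finset.disjoint_left]
    intro w hwT hwB
    have hwA : w ∈ A := by
      have := List.mem_toFinset.mp hwT
      simp only [List.mem_map] at this
      obtain ⟨a, _, rfl⟩ := this
      exact a.2
    have hw := (hmemA w).mp hwA
    simp only [Finset.mem_insert, mem_neighborFinset] at hwB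
    rcases hwB with h | h
    · exact hw.1 h
    · exact hw.2 h
  have hcard : (cyc.support.tail.map Subtype.val).toFinset.card
      + (insert x (G.neighborFinset x)).card ≤ Fintype.card V := by
    rw [← Finset.card_union_of_disjoint hdisj]
    exact Finset.card_le_univ _
  omega
end

section
/- Let G be a double-critical t-chromatic graph, let xy be an edge of G, and let c be a proper (t-2)-coloring of G \ {x,y} with color classes V_1, ..., V_{t-2}. For any distinct indices i, j, if every vertex in N(x) ∩ N(y) ∩ V_i is non-adjacent to every vertex in N(x) ∩ V_j, then there exists an edge of G between (N(y) \ N(x)) ∩ V_i and N(x) ∩ V_j; in particular (N(y) \ N(x)) ∩ V_i is nonempty. -/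
open SimpleGraph

theorem stmt_3 {V : Type*} (G : SimpleGraph V) (t : ℕ)
    (hG : DoubleCritical G t) (x y : V) (hxy : G.Adj x y)
    (c : (G.induce (({x, y}ᶜ : Set V))).Coloring (Fin (t - 2)))
    (i j : Fin (t - 2)) (hij : i ≠ j)
    (hanti : ∀ a ∈ G.neighborSet x ∩ G.neighborSet y ∩
        {v : V | ∃ h : v ∈ ({x, y}ᶜ : Set V), c ⟨v, h⟩ = i},
      ∀ b ∈ G.neighborSet x ∩ {v : V | ∃ h : v ∈ ({x, y}ᶜ : Set V), c ⟨v, h⟩ = j},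
        ¬ G.Adj a b) :
    ∃ a ∈ (G.neighborSet y \ G.neighborSet x) ∩
        {v : V | ∃ h : v ∈ ({x, y}ᶜ : Set V), c ⟨v, h⟩ = i},
      ∃ b ∈ G.neighborSet x ∩ {v : V | ∃ h : v ∈ ({x, y}ᶜ : Set V), c ⟨v, h⟩ = j},
        G.Adj a b := by
  classical
  obtain ⟨-, hchi, -⟩ := hG
  have hij' : (i : ℕ) ≠ (j : ℕ) := fun h => hij (Fin.ext h)
  have hi2 := i.isLt
  have hj2 := j.isLt
  have ht4 : 4 ≤ t := by omega
  have hmem : ∀ v : V, v ≠ x → v ≠ y → v ∈ ({x, y}ᶜ : Set V) := by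
    intro v hvx hvy
    simp [hvx, hvy]
  have hne : ∀ v : V, ∀ h : v ∈ ({x, y}ᶜ : Set V), v ≠ x ∧ v ≠ y := by
    intro v h
    simp only [Set.mem_compl_iff, Set.mem_insert_iff, Set.mem_singleton_iff] at h
    push_neg at h
    exact h
  have hcval : ∀ (u v : V) (hu : u ∈ ({x, y}ᶜ : Set V)) (hv : v ∈ ({x, y}ᶜ : Set V)),
      G.Adj u v → c ⟨u, hu⟩ ≠ c ⟨v, hv⟩ := by
    intro u v hu hv huv
    exact c.valid huv
  have key : ∃ v1, ∃ h1 : v1 ∈ ({x, y}ᶜ : Set V), ∃ v2, ∃ h2 : v2 ∈ ({x, y}ᶜ : Set V),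
      G.Adj x v1 ∧ c ⟨v1, h1⟩ = j ∧ G.Adj y v2 ∧ c ⟨v2, h2⟩ = i ∧ G.Adj v1 v2 := by
    by_contra hcon
    push_neg at hcon
    -- Build a (t-1)-coloring of G, contradicting χ(G) = t.
    set P : V → Prop := fun v => ∃ h : v ∈ ({x, y}ᶜ : Set V),
        (G.Adj x v ∧ c ⟨v, h⟩ = j) ∨ (G.Adj y v ∧ c ⟨v, h⟩ = i) with hPdef
    set f : V → ℕ := fun v =>
      if v = x then (j : ℕ) else if v = y then (i : ℕ) else
        if P v then t - 2 else
          if h : v ∈ ({x, y}ᶜ : Set V) then (c ⟨v, h⟩ : ℕ) else 0 with hfdef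
    have hfx : f x = (j : ℕ) := by simp only [hfdef, if_pos rfl]
    have hfy : f y = (i : ℕ) := by
      simp [hfdef, hxy.ne']
    have hfH : ∀ (v : V) (hv : v ∈ ({x, y}ᶜ : Set V)),
        f v = if P v then t - 2 else (c ⟨v, hv⟩ : ℕ) := by
      intro v hv
      obtain ⟨hvx, hvy⟩ := hne v hv
      simp only [hfdef, if_neg hvx, if_neg hvy, dif_pos hv]
    have hxw : ∀ w, G.Adj x w → w ≠ y → f x ≠ f w := by
      intro w hw hwy
      have hv : w ∈ ({x, y}ᶜ : Set V) := hmem w hw.ne' hwy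
      rw [hfx, hfH w hv]
      by_cases hPw : P w
      · rw [if_pos hPw]; omega
      · rw [if_neg hPw]
        intro h
        exact hPw ⟨hv, Or.inl ⟨hw, Fin.ext h.symm⟩⟩
    have hyw : ∀ w, G.Adj y w → w ≠ x → f y ≠ f w := by
      intro w hw hwx
      have hv : w ∈ ({x, y}ᶜ : Set V) := hmem w hwx hw.ne'
      rw [hfy, hfH w hv]
      by_cases hPw : P w
      · rw [if_pos hPw]; omega
      · rw [if_neg hPw]
        intro h
        exact hPw ⟨hv, Or.inr ⟨hw, Fin.ext h.symm⟩⟩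
    have hvalid : ∀ {u v : V}, G.Adj u v → f u ≠ f v := by
      intro u v huv
      by_cases hux : u = x
      · by_cases hvy : v = y
        · rw [hux, hvy, hfx, hfy]; exact hij'.symm
        · rw [hux] at huv ⊢
          exact hxw v huv hvy
      · by_cases hvx : v = x
        · by_cases huy : u = y
          · rw [huy, hvx, hfy, hfx]; exact hij'
          · rw [hvx] at huv ⊢
            exact (hxw u huv.symm huy).symm
        · by_cases huy : u = y
          · rw [huy] at huv ⊢
            exact hyw v huv hvx
          · by_cases hvy : v = y
            · rw [hvy] at huv ⊢
              exact (hyw u huv.symm hux).symm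
            · have hu : u ∈ ({x, y}ᶜ : Set V) := hmem u hux huy
              have hv : v ∈ ({x, y}ᶜ : Set V) := hmem v hvx hvy
              rw [hfH u hu, hfH v hv]
              by_cases hPu : P u
              · by_cases hPv : P v
                · exfalso
                  obtain ⟨hu', hcase_u⟩ := hPu
                  obtain ⟨hv', hcase_v⟩ := hPv
                  rcases hcase_u with ⟨hxu, hcu'⟩ | ⟨hyu, hcu'⟩ <;>
                    rcases hcase_v with ⟨hxv, hcv'⟩ | ⟨hyv, hcv'⟩
                  · exact hcval u v hu' hv' huv (hcu'.trans hcv'.symm)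
                  · exact hcon u hu' v hv' hxu hcu' hyv hcv' huv
                  · exact hcon v hv' u hu' hxv hcv' hyu hcu' huv.symm
                  · exact hcval u v hu' hv' huv (hcu'.trans hcv'.symm)
                · rw [if_pos hPu, if_neg hPv]
                  have := (c ⟨v, hv⟩).isLt
                  omega
              · by_cases hPv : P v
                · rw [if_neg hPu, if_pos hPv]
                  have := (c ⟨u, hu⟩).isLt
                  omega
                · rw [if_neg hPu, if_neg hPv]
                  intro hval
                  exact hcval u v hu hv huv (Fin.ext hval)
    have hcolorable : G.Colorable (t - 1) := by
      rw [colorable_iff_exists_bdd_nat_coloring]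
      refine ⟨Coloring.mk f hvalid, ?_⟩
      intro v
      show f v < t - 1
      by_cases hvx : v = x
      · rw [hvx, hfx]; omega
      · by_cases hvy : v = y
        · rw [hvy, hfy]; omega
        · have hv : v ∈ ({x, y}ᶜ : Set V) := hmem v hvx hvy
          rw [hfH v hv]
          by_cases hPv : P v
          · rw [if_pos hPv]; omega
          · rw [if_neg hPv]
            have := (c ⟨v, hv⟩).isLt
            omega
    have hle : G.chromaticNumber ≤ ((t - 1 : ℕ) : ℕ∞) :=
      hcolorable.chromaticNumber_le
    rw [hchi] at hle
    have : t ≤ t - 1 := by exact_mod_cast hle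
    omega
  obtain ⟨v1, h1, v2, h2, hxv1, hc1, hyv2, hc2, hadj⟩ := key
  by_cases hxv2 : G.Adj x v2
  · exact absurd hadj.symm (hanti v2 ⟨⟨hxv2, hyv2⟩, h2, hc2⟩ v1 ⟨hxv1, h1, hc1⟩)
  · exact ⟨v2, ⟨⟨hyv2, hxv2⟩, h2, hc2⟩, v1, ⟨hxv1, h1, hc1⟩, hadj.symm⟩
end

section
/- If G is a double-critical t-chromatic claw-free graph with t ≥ 6, then every vertex of G has degree at most 2t - 4. Moreover, every vertex of degree less than |V(G)| - 1 has degree at most 2t - 6. -/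
open SimpleGraph

section Aux

variable {V : Type*} [Fintype V] (G : SimpleGraph V) [DecidableRel G.Adj] {t : ℕ}

lemma aux_notColorable (ht : 6 ≤ t) (hχ : G.chromaticNumber = (t : ℕ∞)) :
    ¬ G.Colorable (t - 1) := by
  intro h
  have h1 : G.chromaticNumber ≤ ((t - 1 : ℕ) : ℕ∞) :=
    chromaticNumber_le_iff_colorable.2 h
  rw [hχ] at h1
  have h2 : ((t - 1 : ℕ) : ℕ∞) < ((t : ℕ) : ℕ∞) := by
    exact_mod_cast Nat.sub_lt (by omega) (by omega)
  exact absurd h1 (not_le.2 h2)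

/-- From double-criticality, an extended coloring of `G - {u,v}` by `t-2` colors. -/
lemma aux_extColoring (ht : 6 ≤ t) (hG : DoubleCritical G t) {u v : V} (huv : G.Adj u v) :
    ∃ C : V → ℕ, (∀ w, C w < t - 2) ∧
      ∀ a b, G.Adj a b → a ≠ u → a ≠ v → b ≠ u → b ≠ v → C a ≠ C b := by
  classical
  have hcrit := hG.2.2 u v huv
  have hcast : ((t : ℕ∞) - 2) = ((t - 2 : ℕ) : ℕ∞) := by
    push_cast
    rfl
  rw [hcast] at hcrit
  have hcol : (G.induce ({u, v}ᶜ : Set V)).Colorable (t - 2) :=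
    (chromaticNumber_le_iff_colorable).1 (le_of_eq hcrit)
  obtain ⟨C₀, hC₀⟩ := (colorable_iff_exists_bdd_nat_coloring (t - 2)).1 hcol
  refine ⟨fun w => if h : w ∈ ({u, v}ᶜ : Set V) then C₀ ⟨w, h⟩ else 0, ?_, ?_⟩
  · intro w
    by_cases h : w ∈ ({u, v}ᶜ : Set V)
    · simp only [dif_pos h]; exact hC₀ _
    · simp only [dif_neg h]; omega
  · intro a b hab hau hav hbu hbv
    have ha : a ∈ ({u, v}ᶜ : Set V) := by simp [hau, hav]
    have hb : b ∈ ({u, v}ᶜ : Set V) := by simp [hbu, hbv]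
    simp only [dif_pos ha, dif_pos hb]
    exact C₀.valid (by simpa using hab)

lemma aux_count (hcf : ClawFree G) (x : V) (s : Finset V) (hs : ∀ w ∈ s, G.Adj x w)
    (C : V → ℕ) (T : Finset ℕ) (himg : ∀ w ∈ s, C w ∈ T)
    (hprop : ∀ a ∈ s, ∀ b ∈ s, G.Adj a b → C a ≠ C b) :
    s.card ≤ 2 * T.card := by
  refine Finset.card_le_mul_card_image_of_maps_to himg 2 ?_
  intro col _
  by_contra hlt
  push_neg at hlt
  obtain ⟨a, b, c, ha, hb, hc, hab, hac, hbc⟩ := Finset.two_lt_card_iff.1 hlt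
  simp only [Finset.mem_filter] at ha hb hc
  have nab : ¬ G.Adj a b := fun h => hprop a ha.1 b hb.1 h (ha.2.trans hb.2.symm)
  have nac : ¬ G.Adj a c := fun h => hprop a ha.1 c hc.1 h (ha.2.trans hc.2.symm)
  have nbc : ¬ G.Adj b c := fun h => hprop b hb.1 c hc.1 h (hb.2.trans hc.2.symm)
  rcases hcf x a b c hab hac hbc (hs a ha.1) (hs b hb.1) (hs c hc.1) with h | h | h
  · exact nab h
  · exact nac h
  · exact nbc h

end Aux

theorem stmt_4 {V : Type*} [Fintype V] (G : SimpleGraph V) [DecidableRel G.Adj] (t : ℕ)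
    (ht : 6 ≤ t) (hG : DoubleCritical G t) (hcf : ClawFree G) (x : V) :
    G.degree x ≤ 2 * t - 4 ∧
      (G.degree x < Fintype.card V - 1 → G.degree x ≤ 2 * t - 6) := by
  classical
  have hnotcol := aux_notColorable G ht hG.2.1
  -- There exists an edge avoiding x
  have hedge : ∃ u v : V, G.Adj u v ∧ u ≠ x ∧ v ≠ x := by
    by_contra h
    push_neg at h
    apply hnotcol
    rw [colorable_iff_exists_bdd_nat_coloring]
    refine ⟨Coloring.mk (fun w => if w = x then 0 else 1) ?_, ?_⟩
    · intro a b hab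
      by_cases hax : a = x
      · have hbx : b ≠ x := by
          intro hb
          rw [hax, hb] at hab
          exact G.loopless.irrefl x hab
        simp [hax, hbx]
      · have hbx : b = x := h a b hab hax
        simp [hax, hbx]
    · intro w
      show (if w = x then 0 else 1) < t - 1
      by_cases hw : w = x <;> simp [hw] <;> omega
  -- generic counting: if edge u v avoids x, then |N(x) \ {u,v}| ≤ 2*(t-3)
  have key : ∀ u v : V, G.Adj u v → u ≠ x → v ≠ x →
      ((G.neighborFinset x).filter (fun w => w ≠ u ∧ w ≠ v)).card ≤ 2 * (t - 3) := by
    intro u v huv hux hvx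
    obtain ⟨C, hClt, hCprop⟩ := aux_extColoring G ht hG huv
    set s := (G.neighborFinset x).filter (fun w => w ≠ u ∧ w ≠ v) with hsdef
    have hsadj : ∀ w ∈ s, G.Adj x w := by
      intro w hw
      simp only [hsdef, Finset.mem_filter, mem_neighborFinset] at hw
      exact hw.1
    have hCx : ∀ w ∈ s, C w ≠ C x := by
      intro w hw
      simp only [hsdef, Finset.mem_filter, mem_neighborFinset] at hw
      exact fun h => hCprop w x hw.1.symm hw.2.1 hw.2.2 (Ne.symm hux) (Ne.symm hvx) h
    have hT : ∀ w ∈ s, C w ∈ (Finset.range (t - 2)).erase (C x) := by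
      intro w hw
      exact Finset.mem_erase.2 ⟨hCx w hw, Finset.mem_range.2 (hClt w)⟩
    have hcard : ((Finset.range (t - 2)).erase (C x)).card = t - 3 := by
      rw [Finset.card_erase_of_mem (Finset.mem_range.2 (hClt x)), Finset.card_range]
      omega
    have := aux_count G hcf x s hsadj C _ hT ?_
    · rw [hcard] at this; exact this
    · intro a ha b hb hab
      rw [hsdef, Finset.mem_filter] at ha hb
      exact hCprop a b hab ha.2.1 ha.2.2 hb.2.1 hb.2.2
  constructor
  · -- first claim
    obtain ⟨u, v, huv, hux, hvx⟩ := hedge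
    have h1 := key u v huv hux hvx
    have h2 : (G.neighborFinset x).card ≤
        ((G.neighborFinset x).filter (fun w => w ≠ u ∧ w ≠ v)).card + 2 := by
      have := Finset.card_filter_add_card_filter_not
        (s := G.neighborFinset x) (p := fun w => w ≠ u ∧ w ≠ v)
      have hle : ((G.neighborFinset x).filter (fun w => ¬(w ≠ u ∧ w ≠ v))).card ≤ 2 := by
        have hsub : (G.neighborFinset x).filter (fun w => ¬(w ≠ u ∧ w ≠ v)) ⊆ {u, v} := by
          intro w hw
          simp only [Finset.mem_filter, not_and_or, not_ne_iff] at hw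
          simp only [Finset.mem_insert, Finset.mem_singleton]
          tauto
        calc _ ≤ ({u, v} : Finset V).card := Finset.card_le_card hsub
          _ ≤ 2 := Finset.card_insert_le _ _ |>.trans (by simp)
      omega
    rw [SimpleGraph.degree]
    omega
  · -- second claim
    intro hdeg
    -- x has a non-neighbor
    have hz : ∃ z : V, z ≠ x ∧ ¬ G.Adj x z := by
      by_contra h
      push_neg at h
      have hsub : Finset.univ.erase x ⊆ G.neighborFinset x := by
        intro w hw
        rw [mem_neighborFinset]
        exact h w (Finset.mem_erase.1 hw).1
      have := Finset.card_le_card hsub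
      rw [Finset.card_erase_of_mem (Finset.mem_univ x), Finset.card_univ] at this
      rw [SimpleGraph.degree] at hdeg
      omega
    obtain ⟨z, hzx, hznadj⟩ := hz
    -- case: exists edge entirely outside N[x]
    by_cases hout : ∃ u v : V, G.Adj u v ∧ u ≠ x ∧ v ≠ x ∧ ¬ G.Adj x u ∧ ¬ G.Adj x v
    · obtain ⟨u, v, huv, hux, hvx, hxu, hxv⟩ := hout
      have h1 := key u v huv hux hvx
      have heq : (G.neighborFinset x).filter (fun w => w ≠ u ∧ w ≠ v) =
          G.neighborFinset x := by
        apply Finset.filter_true_of_mem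
        intro w hw
        rw [mem_neighborFinset] at hw
        exact ⟨fun h => hxu (h ▸ hw), fun h => hxv (h ▸ hw)⟩
      rw [heq] at h1
      rw [SimpleGraph.degree]
      omega
    · -- no edge outside N[x]: derive contradiction
      exfalso
      -- z has a neighbor y
      have hy : ∃ y : V, G.Adj z y := by
        obtain ⟨p⟩ := hG.1.preconnected z x
        cases p with
        | nil => exact absurd rfl hzx
        | cons h q => exact ⟨_, h⟩
      obtain ⟨y, hzy⟩ := hy
      obtain ⟨C, hClt, hCprop⟩ := aux_extColoring G ht hG hzy
      have hyx : y ≠ x := fun h => hznadj (by rw [h] at hzy; exact hzy.symm)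
      -- every neighbor w of z with w ≠ y is in N(x)
      have hNz : ∀ w : V, G.Adj z w → w ≠ y → G.Adj x w := by
        intro w hw hwy
        by_contra hxw
        have hwx : w ≠ x := fun h => hznadj (by rw [h] at hw; exact hw.symm)
        exact hout ⟨z, w, hw, hzx, hwx, hznadj, hxw⟩
      -- build a (t-1)-coloring of G: z gets C x, y gets t-2, others keep C
      apply hnotcol
      rw [colorable_iff_exists_bdd_nat_coloring]
      have hxz : x ≠ z := hzx.symm
      have hxy : x ≠ y := hyx.symm
      refine ⟨Coloring.mk (fun w => if w = z then C x else if w = y then t - 2 else C w) ?_, ?_⟩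
      · intro a b hab
        have hCxlt := hClt x
        have hyz : y ≠ z := hzy.ne'
        by_cases haz : a = z
        · have hbz : b ≠ z := fun hb => G.loopless.irrefl z (by rw [haz, hb] at hab; exact hab)
          by_cases hby : b = y
          · simp only [haz, hby, if_pos rfl, if_neg hyz, ite_true]
            omega
          · have hbN : G.Adj x b := hNz b (haz ▸ hab) hby
            have hCb : C b ≠ C x := fun h => hCprop b x hbN.symm hbz hby hxz hxy h
            simp only [haz, if_pos rfl, if_neg hbz, if_neg hby]
            exact fun h => hCb h.symm
        · by_cases hbz : b = z
          · by_cases hay : a = y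
            · simp only [hay, hbz, if_neg hyz, if_pos rfl, eq_self_iff_true, if_true, ite_true]
              omega
            · have haN : G.Adj x a := hNz a (hbz ▸ hab.symm) hay
              have hCa : C a ≠ C x := fun h => hCprop a x haN.symm haz hay hxz hxy h
              simp only [hbz, if_neg haz, if_neg hay, if_pos rfl, eq_self_iff_true, if_true, ite_true]
              exact hCa
          · by_cases hay : a = y
            · have hby : b ≠ y := fun hb => G.loopless.irrefl y (by rw [hay, hb] at hab; exact hab)
              simp only [hay, if_neg haz, if_neg hyz, if_pos rfl, if_neg hbz, if_neg hby, ite_true]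
              have := hClt b
              omega
            · by_cases hby : b = y
              · simp only [hby, if_neg haz, if_neg hay, if_neg hbz, if_neg hyz, if_pos rfl, eq_self_iff_true, if_true, ite_true]
                have := hClt a
                omega
              · simp only [if_neg haz, if_neg hay, if_neg hbz, if_neg hby]
                exact hCprop a b hab haz hay hbz hby
      · intro w
        show (if w = z then C x else if w = y then t - 2 else C w) < t - 1
        have h1 := hClt w
        have h2 := hClt x
        by_cases hwz : w = z
        · simp only [if_pos hwz]; omega
        · by_cases hwy : w = y
          · simp only [if_neg hwz, if_pos hwy]; omega
          · simp only [if_neg hwz, if_neg hwy]; omega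
end

section
/- There is no double-critical, 6-chromatic, claw-free graph other than K_6; that is, if G is a claw-free double-critical graph with chromatic number 6, then G is the complete graph on 6 vertices. -/
open SimpleGraph

namespace DCAux

variable {V : Type*} {G : SimpleGraph V}

lemma colorable_of_fun {n : ℕ} (g : V → Fin n)
    (h : ∀ v w, G.Adj v w → g v ≠ g w) : G.Colorable n :=
  ⟨SimpleGraph.Coloring.mk g (fun {v w} hvw => h v w hvw)⟩

lemma notColorable5 (hG : DoubleCritical G 6) : ¬ G.Colorable 5 := by
  intro hc
  have h := hc.chromaticNumber_le
  rw [hG.2.1] at h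
  simp at h
  exact absurd h (by decide)

lemma DC4 (hG : DoubleCritical G 6) {x y : V} (hxy : G.Adj x y) :
    ∃ g : V → Fin 4, ∀ v w, v ≠ x → v ≠ y → w ≠ x → w ≠ y → G.Adj v w → g v ≠ g w := by
  classical
  have h := hG.2.2 x y hxy
  have h62 : ((6:ℕ) : ℕ∞) - 2 = ((4:ℕ) : ℕ∞) := by decide
  have h4 : (G.induce ({x, y}ᶜ : Set V)).chromaticNumber ≤ ((4:ℕ) : ℕ∞) := by
    rw [h, h62]
  obtain ⟨C⟩ := SimpleGraph.chromaticNumber_le_iff_colorable.mp h4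
  refine ⟨fun v => if hv : v ∈ ({x, y}ᶜ : Set V) then C ⟨v, hv⟩ else 0, ?_⟩
  intro v w hv1 hv2 hw1 hw2 hadj
  have hv : v ∈ ({x, y}ᶜ : Set V) := by simp [hv1, hv2]
  have hw : w ∈ ({x, y}ᶜ : Set V) := by simp [hw1, hw2]
  simp only [dif_pos hv, dif_pos hw]
  exact C.valid (by simpa using hadj)

lemma exists_adj (hG : DoubleCritical G 6) (v : V) : ∃ w, G.Adj v w := by
  by_contra hv
  push_neg at hv
  have hall : ∀ u : V, u = v := by
    intro u
    obtain ⟨w⟩ := (hG.1.preconnected v u)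
    cases w with
    | nil => rfl
    | cons h p => exact absurd h (hv _)
  apply notColorable5 hG
  refine colorable_of_fun (fun _ => 0) ?_
  intro a b hab
  rw [hall a, hall b] at hab
  exact absurd hab (G.irrefl)

lemma castSucc_ne_four : ∀ i : Fin 4, (i.castSucc : Fin 5) ≠ 4 := by decide

lemma offOne (hG : DoubleCritical G 6) (v : V) :
    ∃ g : V → Fin 5, ∀ a b, a ≠ v → b ≠ v → G.Adj a b → g a ≠ g b := by
  classical
  obtain ⟨w, hw⟩ := exists_adj hG v
  obtain ⟨g, hg⟩ := DC4 hG hw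
  refine ⟨fun u => if u = w then 4 else (g u).castSucc, ?_⟩
  intro a b ha hb hab
  by_cases haw : a = w <;> by_cases hbw : b = w
  · subst haw; subst hbw; exact absurd hab (G.irrefl)
  · simp only [if_pos haw, if_neg hbw]
    exact (castSucc_ne_four (g b)).symm
  · simp only [if_neg haw, if_pos hbw]
    exact castSucc_ne_four (g a)
  · simp only [if_neg haw, if_neg hbw]
    intro hcontra
    exact hg a b ha haw hb hbw hab (Fin.castSucc_injective _ hcontra)

lemma CN (hG : DoubleCritical G 6) {x y : V} (hxy : G.Adj x y)
    (g : V → Fin 4) (hg : ∀ v w, v ≠ x → v ≠ y → w ≠ x → w ≠ y → G.Adj v w → g v ≠ g w)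
    (i : Fin 4) : ∃ w, G.Adj x w ∧ G.Adj y w ∧ g w = i := by
  classical
  by_contra hno
  push_neg at hno
  apply notColorable5 hG
  refine colorable_of_fun
    (fun u => if u = x then i.castSucc else
      if u = y ∨ (G.Adj x u ∧ g u = i) then 4 else (g u).castSucc) ?_
  intro a b hab
  have hirr : a ≠ b := G.ne_of_adj hab
  by_cases hax : a = x
  · have hbx : b ≠ x := by
      rw [← hax]; exact hirr.symm
    have hxb : G.Adj x b := by rw [← hax]; exact hab
    simp only [if_pos hax, if_neg hbx]
    by_cases hb : b = y ∨ (G.Adj x b ∧ g b = i)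
    · rw [if_pos hb]
      exact castSucc_ne_four i
    · rw [if_neg hb]
      push_neg at hb
      intro hcon
      exact hb.2 hxb ((Fin.castSucc_injective _ hcon).symm)
  · by_cases hbx : b = x
    · have hxa : G.Adj x a := by rw [← hbx]; exact hab.symm
      simp only [if_pos hbx, if_neg hax]
      by_cases ha : a = y ∨ (G.Adj x a ∧ g a = i)
      · rw [if_pos ha]
        exact (castSucc_ne_four i).symm
      · rw [if_neg ha]
        push_neg at ha
        intro hcon
        exact ha.2 hxa (Fin.castSucc_injective _ hcon)
    · simp only [if_neg hax, if_neg hbx]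
      by_cases haA : a = y ∨ (G.Adj x a ∧ g a = i) <;>
        by_cases hbA : b = y ∨ (G.Adj x b ∧ g b = i)
      · exfalso
        rcases haA with hay | haI
        · rcases hbA with hby | hbI
          · exact hirr (hay.trans hby.symm)
          · subst hay
            exact hno b hbI.1 hab hbI.2
        · rcases hbA with hby | hbI
          · subst hby
            exact hno a haI.1 hab.symm haI.2
          · by_cases hay : a = y
            · subst hay
              exact hno b hbI.1 hab hbI.2
            · by_cases hby : b = y
              · subst hby
                exact hno a haI.1 hab.symm haI.2
              · exact hg a b hax hay hbx hby hab (haI.2.trans hbI.2.symm)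
      · rw [if_pos haA, if_neg hbA]
        exact (castSucc_ne_four (g b)).symm
      · rw [if_neg haA, if_pos hbA]
        exact castSucc_ne_four (g a)
      · rw [if_neg haA, if_neg hbA]
        push_neg at haA hbA
        intro hcon
        exact hg a b hax haA.1 hbx hbA.1 hab (Fin.castSucc_injective _ hcon)

/-- Packaged common-neighbor system for an edge. -/
lemma commonW (hG : DoubleCritical G 6) {x y : V} (hxy : G.Adj x y) :
    ∃ (g : V → Fin 4) (w : Fin 4 → V),
      (∀ v u, v ≠ x → v ≠ y → u ≠ x → u ≠ y → G.Adj v u → g v ≠ g u) ∧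
      (∀ i, G.Adj x (w i) ∧ G.Adj y (w i) ∧ g (w i) = i) := by
  obtain ⟨g, hg⟩ := DC4 hG hxy
  choose w h1 h2 h3 using fun i => CN hG hxy g hg i
  exact ⟨g, w, hg, fun i => ⟨h1 i, h2 i, h3 i⟩⟩

lemma small_of_no_three {S : Set V}
    (h : ∀ u ∈ S, ∀ v ∈ S, ∀ w ∈ S, u = v ∨ u = w ∨ v = w) :
    S.Finite ∧ S.ncard ≤ 2 := by
  classical
  by_cases h1 : ∃ u, u ∈ S
  · obtain ⟨u, hu⟩ := h1
    by_cases h2 : ∃ v ∈ S, v ≠ u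
    · obtain ⟨v, hv, hvu⟩ := h2
      have hsub : S ⊆ {u, v} := by
        intro w hw
        rcases h u hu v hv w hw with h' | h' | h'
        · exact absurd h'.symm hvu
        · exact Or.inl h'.symm
        · exact Or.inr h'.symm
      have hfin : ({u, v} : Set V).Finite := (Set.finite_singleton _).insert _
      refine ⟨hfin.subset hsub, ?_⟩
      calc S.ncard ≤ ({u, v} : Set V).ncard := Set.ncard_le_ncard hsub hfin
        _ = 2 := Set.ncard_pair (Ne.symm hvu)
    · push_neg at h2
      have hsub : S ⊆ {u} := fun w hw => h2 w hw
      refine ⟨(Set.finite_singleton u).subset hsub, ?_⟩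
      calc S.ncard ≤ ({u} : Set V).ncard :=
            Set.ncard_le_ncard hsub (Set.finite_singleton u)
        _ = 1 := Set.ncard_singleton u
        _ ≤ 2 := by omega
  · push_neg at h1
    have : S = ∅ := Set.eq_empty_iff_forall_notMem.mpr h1
    rw [this]
    simp

lemma main_noncomplete (hG : DoubleCritical G 6) (hcf : ClawFree G)
    {p q : V} (hpq : p ≠ q) (hnadj : ¬ G.Adj p q) : False := by
  classical
  -- no 6-clique
  have no6 : ∀ S : Set V, S.ncard = 6 → (∀ a ∈ S, ∀ b ∈ S, a ≠ b → G.Adj a b) → False := by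
    intro S hS hclique
    by_cases hex : ∃ v, v ∉ S
    · obtain ⟨v, hv⟩ := hex
      obtain ⟨g, hg⟩ := offOne hG v
      have hinj : Set.InjOn g S := by
        intro a ha b hb hgab
        by_contra hne
        exact hg a b (fun h => hv (h ▸ ha)) (fun h => hv (h ▸ hb))
          (hclique a ha b hb hne) hgab
      have hfin : S.Finite := by
        by_contra hinf
        rw [Set.Infinite.ncard hinf] at hS
        omega
      have h1 : (g '' S).ncard = 6 := by
        rw [Set.ncard_image_of_injOn hinj, hS]
      have h2 : (g '' S).ncard ≤ 5 := by
        have h3 := Set.ncard_le_ncard (Set.subset_univ (g '' S)) Set.finite_univ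
        simpa [Set.ncard_univ] using h3
      omega
    · push_neg at hex
      exact hnadj (hclique p (hex p) q (hex q) hpq)
  by_cases hedge : ∃ a b : V, G.Adj a b ∧ ¬ G.Adj p a ∧ ¬ G.Adj p b ∧ a ≠ p ∧ b ≠ p
  · -- CASE A : an edge avoiding the closed neighborhood of p
    obtain ⟨a, b, hab, hpa, hpb, hap, hbp⟩ := hedge
    set Np := {v : V | G.Adj p v} with hNpdef
    obtain ⟨g, hg⟩ := DC4 hG hab
    have hgp : ∀ v ∈ Np, g v ≠ g p := by
      intro v hv
      have hv' : G.Adj p v := hv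
      have hva : v ≠ a := fun h => hpa (h ▸ hv')
      have hvb : v ≠ b := fun h => hpb (h ▸ hv')
      exact hg v p hva hvb (Ne.symm hap) (Ne.symm hbp) hv'.symm
    have hclass : ∀ i : Fin 4,
        {v | v ∈ Np ∧ g v = i}.Finite ∧ {v | v ∈ Np ∧ g v = i}.ncard ≤ 2 := by
      intro i
      apply small_of_no_three
      intro u hu v hv w hw
      by_contra hne
      push_neg at hne
      have key : ∀ s t : V, s ∈ Np → t ∈ Np → g s = i → g t = i → ¬ G.Adj s t := by
        intro s t hs ht hgs hgt hst
        have hs' : G.Adj p s := hs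
        have ht' : G.Adj p t := ht
        have hsa : s ≠ a := fun h => hpa (h ▸ hs')
        have hsb : s ≠ b := fun h => hpb (h ▸ hs')
        have hta : t ≠ a := fun h => hpa (h ▸ ht')
        have htb : t ≠ b := fun h => hpb (h ▸ ht')
        exact hg s t hsa hsb hta htb hst (hgs.trans hgt.symm)
      rcases hcf p u v w hne.1 hne.2.1 hne.2.2 hu.1 hv.1 hw.1 with h | h | h
      · exact key u v hu.1 hv.1 hu.2 hv.2 h
      · exact key u w hu.1 hw.1 hu.2 hw.2 h
      · exact key v w hv.1 hw.1 hv.2 hw.2 h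
    obtain ⟨c1, c2, c3, hc⟩ :
        ∃ c1 c2 c3 : Fin 4, ∀ i : Fin 4, i ≠ g p → (i = c1 ∨ i = c2 ∨ i = c3) := by
      have hdec : ∀ j : Fin 4, ∃ c1 c2 c3 : Fin 4,
          ∀ i : Fin 4, i ≠ j → (i = c1 ∨ i = c2 ∨ i = c3) := by decide
      exact hdec (g p)
    have hsub3 : Np ⊆ {v | v ∈ Np ∧ g v = c1} ∪ {v | v ∈ Np ∧ g v = c2}
        ∪ {v | v ∈ Np ∧ g v = c3} := by
      intro v hv
      rcases hc (g v) (hgp v hv) with h | h | h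
      · exact Or.inl (Or.inl ⟨hv, h⟩)
      · exact Or.inl (Or.inr ⟨hv, h⟩)
      · exact Or.inr ⟨hv, h⟩
    have hufin : ({v | v ∈ Np ∧ g v = c1} ∪ {v | v ∈ Np ∧ g v = c2}
        ∪ {v | v ∈ Np ∧ g v = c3}).Finite :=
      ((hclass c1).1.union (hclass c2).1).union (hclass c3).1
    have hNfin : Np.Finite := hufin.subset hsub3
    have hN6 : Np.ncard ≤ 6 := by
      have h1 := Set.ncard_le_ncard hsub3 hufin
      have h2 := Set.ncard_union_le
        ({v | v ∈ Np ∧ g v = c1} ∪ {v | v ∈ Np ∧ g v = c2}) {v | v ∈ Np ∧ g v = c3}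
      have h3 := Set.ncard_union_le {v | v ∈ Np ∧ g v = c1} {v | v ∈ Np ∧ g v = c2}
      have e1 := (hclass c1).2
      have e2 := (hclass c2).2
      have e3 := (hclass c3).2
      omega
    -- common-neighbor systems
    have hWsys : ∀ y, G.Adj p y → ∃ w : Fin 4 → V,
        (Set.range w).ncard = 4 ∧ Set.range w ⊆ Np \ {y} ∧
        (∀ i, G.Adj p (w i) ∧ G.Adj y (w i)) ∧
        (∀ v, G.Adj p v → v ≠ y → ¬ G.Adj y v → v ∉ Set.range w) ∧
        (∀ v, G.Adj p v → v ≠ y → (∀ i, v ≠ w i) → ∃ j, ¬ G.Adj (w j) v ∧ w j ≠ v) := by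
      intro y hy
      obtain ⟨gy, w, hgy, hw⟩ := commonW hG hy
      have hinj : Function.Injective w := by
        intro i j hij
        have h1 := (hw i).2.2
        rw [hij, (hw j).2.2] at h1
        exact h1.symm
      refine ⟨w, ?_, ?_, fun i => ⟨(hw i).1, (hw i).2.1⟩, ?_, ?_⟩
      · rw [← Set.image_univ, Set.ncard_image_of_injective _ hinj, Set.ncard_univ]
        simp
      · rintro v ⟨i, rfl⟩
        exact ⟨(hw i).1, fun h => (G.ne_of_adj (hw i).2.1)
          (Set.mem_singleton_iff.mp h).symm⟩
      · rintro v hpv hvy hyv ⟨i, rfl⟩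
        exact hyv (hw i).2.1
      · intro v hpv hvy hvw
        refine ⟨gy v, ?_, (hvw (gy v)).symm⟩
        intro hadj'
        have hwp : w (gy v) ≠ p := fun h => G.irrefl (h ▸ (hw (gy v)).1)
        have hwy : w (gy v) ≠ y := fun h => G.irrefl (h ▸ (hw (gy v)).2.1)
        have hvp : v ≠ p := fun h => G.irrefl (h ▸ hpv)
        have hcol := hgy (w (gy v)) v hwp hwy hvp hvy hadj'
        rw [(hw (gy v)).2.2] at hcol
        exact hcol rfl
    obtain ⟨y0, hy0⟩ := exists_adj hG p
    have hy0N : y0 ∈ Np := hy0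
    obtain ⟨w0, hw0card, hw0sub, hw0adj, hw0non, hw0last⟩ := hWsys y0 hy0
    have hdiff0 : (Np \ {y0}).ncard + 1 = Np.ncard :=
      Set.ncard_diff_singleton_add_one hy0N hNfin
    have hN5 : 5 ≤ Np.ncard := by
      have h1 : (Set.range w0).ncard ≤ (Np \ {y0}).ncard :=
        Set.ncard_le_ncard hw0sub hNfin.diff
      omega
    have hcases : Np.ncard = 5 ∨ Np.ncard = 6 := by omega
    rcases hcases with hcard5 | hcard6
    · -- |N(p)| = 5 : closed neighborhood is a 6-clique
      have hadjall : ∀ y ∈ Np, ∀ v ∈ Np, v ≠ y → G.Adj y v := by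
        intro y hy v hv hvy
        obtain ⟨w, hwcard, hwsub, hwadj, hwnon, _⟩ := hWsys y hy
        have hdiff : (Np \ {y}).ncard + 1 = Np.ncard :=
          Set.ncard_diff_singleton_add_one hy hNfin
        have heq : Set.range w = Np \ {y} :=
          Set.eq_of_subset_of_ncard_le hwsub (by omega) hNfin.diff
        have hvmem : v ∈ Set.range w := by
          rw [heq]
          exact ⟨hv, by simp [hvy]⟩
        obtain ⟨i, rfl⟩ := hvmem
        exact (hwadj i).2
      have hpN : p ∉ Np := fun h => G.irrefl (h : G.Adj p p)
      apply no6 (insert p Np)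
      · rw [Set.ncard_insert_of_notMem hpN hNfin, hcard5]
      · intro u hu v hv huv
        rcases hu with rfl | hu
        · rcases hv with rfl | hv
          · exact absurd rfl huv
          · exact hv
        · rcases hv with rfl | hv
          · exact (hu : G.Adj v u).symm
          · exact hadjall u hu v hv (Ne.symm huv)
    · -- |N(p)| = 6 : matching property then contradiction
      have hmatch : ∀ u ∈ Np, ∀ v ∈ Np, ∀ v' ∈ Np, v ≠ u → ¬ G.Adj u v →
          v' ≠ u → ¬ G.Adj u v' → v = v' := by
        intro u hu v hv v' hv' hvu hadjv hv'u hadjv'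
        obtain ⟨w, hwcard, hwsub, hwadj, hwnon, _⟩ := hWsys u hu
        have hdiff : (Np \ {u}).ncard + 1 = Np.ncard :=
          Set.ncard_diff_singleton_add_one hu hNfin
        have hD : ((Np \ {u}) \ Set.range w).ncard = 1 := by
          rw [Set.ncard_diff hwsub (Set.finite_range w)]
          omega
        obtain ⟨z, hz⟩ := Set.ncard_eq_one.mp hD
        have hvmem : v ∈ (Np \ {u}) \ Set.range w :=
          ⟨⟨hv, by simp [hvu]⟩, hwnon v hv hvu hadjv⟩
        have hv'mem : v' ∈ (Np \ {u}) \ Set.range w :=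
          ⟨⟨hv', by simp [hv'u]⟩, hwnon v' hv' hv'u hadjv'⟩
        rw [hz] at hvmem hv'mem
        exact (Set.mem_singleton_iff.mp hvmem).trans
          (Set.mem_singleton_iff.mp hv'mem).symm
      have hnecl : ¬ ∀ a' ∈ Np, ∀ b' ∈ Np, a' ≠ b' → G.Adj a' b' := by
        intro hcl
        exact no6 Np hcard6 hcl
      push_neg at hnecl
      obtain ⟨v1, hv1, w1, hw1, hne1, hnadj1⟩ := hnecl
      obtain ⟨w, hwcard, hwsub, hwadj, hwnon, hwlast⟩ := hWsys v1 hv1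
      have hw1r : ∀ i, w1 ≠ w i := by
        intro i h
        apply hnadj1
        rw [h]
        exact (hwadj i).2
      obtain ⟨j, hj1, hj2⟩ := hwlast w1 hw1 (Ne.symm hne1) hw1r
      have hwjN : w j ∈ Np := (hwsub ⟨j, rfl⟩).1
      have hfin : v1 = w j := by
        apply hmatch w1 hw1 v1 hv1 (w j) hwjN hne1
          (fun h => hnadj1 h.symm) hj2 (fun h => hj1 h.symm)
      exact G.irrefl (hfin ▸ (hwadj j).2)
  · -- CASE B : every edge meets N[p] : twin-killer
    push_neg at hedge
    have htwin : ∀ w, G.Adj q w → G.Adj p w := by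
      intro w hw
      by_contra hpw
      have hwp : w ≠ p := by
        intro h
        subst h
        exact hnadj hw.symm
      exact hwp (hedge q w hw hnadj hpw (Ne.symm hpq))
    obtain ⟨g, hg⟩ := offOne hG q
    apply notColorable5 hG
    refine colorable_of_fun (fun u => if u = q then g p else g u) ?_
    intro a b hab
    have hne := G.ne_of_adj hab
    by_cases haq : a = q <;> by_cases hbq : b = q
    · exact absurd (haq.trans hbq.symm) hne
    · simp only [if_pos haq, if_neg hbq]
      have hqb : G.Adj q b := by rw [← haq]; exact hab
      exact hg p b hpq hbq (htwin b hqb)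
    · simp only [if_neg haq, if_pos hbq]
      have hqa : G.Adj q a := by rw [← hbq]; exact hab.symm
      exact (hg p a hpq haq (htwin a hqa)).symm
    · simp only [if_neg haq, if_neg hbq]
      exact hg a b haq hbq hab

end DCAux

theorem stmt_5 {V : Type*} (G : SimpleGraph V)
    (hG : DoubleCritical G 6) (hcf : ClawFree G) :
    Nonempty (G ≃g (⊤ : SimpleGraph (Fin 6))) := by
  classical
  by_cases hcomp : ∀ u v : V, u ≠ v → G.Adj u v
  · have h6 : G.Colorable 6 := by
      apply SimpleGraph.chromaticNumber_le_iff_colorable.mp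
      rw [hG.2.1]
    obtain ⟨C⟩ := h6
    have hinj : Function.Injective C := by
      intro u v h
      by_contra hne
      exact C.valid (hcomp u v hne) h
    have hfinV : Finite V := Finite.of_injective C hinj
    have : Fintype V := Fintype.ofFinite V
    have hle : Fintype.card V ≤ 6 := by
      have h := Fintype.card_le_of_injective C hinj
      simpa using h
    have hgt : ¬ (Fintype.card V ≤ 5) := by
      intro h
      apply DCAux.notColorable5 hG
      refine DCAux.colorable_of_fun
        (fun v => Fin.castLE h ((Fintype.equivFin V) v)) ?_
      intro u v hadj hcontra
      have h2 : (Fintype.equivFin V) u = (Fintype.equivFin V) v :=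
        Fin.castLE_injective h hcontra
      exact G.ne_of_adj hadj ((Fintype.equivFin V).injective h2)
    have hcard : Fintype.card V = 6 := by omega
    let e : V ≃ Fin 6 := Fintype.equivFinOfCardEq hcard
    refine ⟨⟨e, ?_⟩⟩
    intro u v
    rw [top_adj]
    constructor
    · intro h
      exact hcomp u v (fun hh => h (congrArg e hh))
    · intro h hh
      exact G.ne_of_adj h (e.injective hh)
  · push_neg at hcomp
    obtain ⟨u, v, huv, hnadj⟩ := hcomp
    exact (DCAux.main_noncomplete hG hcf huv hnadj).elim
end

section
/- There is no double-critical, 7-chromatic, claw-free graph other than K_7; that is, if G is a claw-free double-critical graph with chromatic number 7, then G is the complete graph on 7 vertices. -/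
open SimpleGraph

namespace DC7

variable {V : Type*} {G : SimpleGraph V}

/-- proper partial coloring on a set -/
def PC (G : SimpleGraph V) (S : Set V) {n : ℕ} (c : V → Fin n) : Prop :=
  ∀ ⦃u⦄, u ∈ S → ∀ ⦃v⦄, v ∈ S → G.Adj u v → c u ≠ c v

lemma colorable_of_PC {S : Set V} {n : ℕ} {c : V → Fin n} (h : PC G S c) :
    (G.induce S).Colorable n :=
  ⟨SimpleGraph.Coloring.mk (fun v => c v.1) (by
    rintro ⟨u, hu⟩ ⟨v, hv⟩ hadj
    exact h hu hv (by simpa using hadj))⟩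

lemma PC_of_colorable {S : Set V} {n : ℕ} (hn : 0 < n) (h : (G.induce S).Colorable n) :
    ∃ c : V → Fin n, PC G S c := by
  obtain ⟨C⟩ := h
  classical
  refine ⟨fun v => if hv : v ∈ S then C ⟨v, hv⟩ else ⟨0, hn⟩, ?_⟩
  intro u hu v hv hadj
  simp only [dif_pos hu, dif_pos hv]
  exact C.valid (by simpa using hadj)

lemma mem_pairc {x y v : V} : v ∈ ({x, y}ᶜ : Set V) ↔ v ≠ x ∧ v ≠ y := by
  simp [not_or]

lemma pairc_comm (x y : V) : ({x, y}ᶜ : Set V) = ({y, x}ᶜ : Set V) := by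
  rw [Set.pair_comm]

lemma no_indep_triple (hcf : ClawFree G) {x a b c : V} (ha : G.Adj x a) (hb : G.Adj x b)
    (hc : G.Adj x c) (hab : a ≠ b) (hac : a ≠ c) (hbc : b ≠ c)
    (nab : ¬ G.Adj a b) (nac : ¬ G.Adj a c) (nbc : ¬ G.Adj b c) : False := by
  rcases hcf x a b c hab hac hbc ha hb hc with h | h | h <;> contradiction

lemma small_of_no_triple {s : Set V}
    (h : ∀ a b c : V, a ∈ s → b ∈ s → c ∈ s → a ≠ b → a ≠ c → b ≠ c → False) :
    s.Finite ∧ s.ncard ≤ 2 := by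
  classical
  rcases s.eq_empty_or_nonempty with rfl | ⟨a, ha⟩
  · simp
  by_cases h1 : s ⊆ {a}
  · constructor
    · exact Set.Finite.subset (Set.finite_singleton a) h1
    · calc s.ncard ≤ ({a} : Set V).ncard := Set.ncard_le_ncard h1 (Set.finite_singleton a)
        _ ≤ 2 := by simp
  · obtain ⟨b, hb, hba⟩ : ∃ b ∈ s, b ≠ a := by
      by_contra hc; push_neg at hc
      exact h1 (fun v hv => by simp [hc v hv])
    by_cases h2 : s ⊆ {a, b}
    · constructor
      · exact Set.Finite.subset (s := {a, b}) (Set.toFinite _) h2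
      · calc s.ncard ≤ ({a, b} : Set V).ncard := Set.ncard_le_ncard h2 (Set.toFinite _)
          _ ≤ 2 := by
            calc ({a, b} : Set V).ncard ≤ ({b} : Set V).ncard + 1 := Set.ncard_insert_le a {b}
              _ ≤ 2 := by simp
    · obtain ⟨c, hc, hcab⟩ : ∃ c ∈ s, c ∉ ({a, b} : Set V) := by
        by_contra hcc; push_neg at hcc; exact h2 hcc
      simp only [Set.mem_insert_iff, Set.mem_singleton_iff, not_or] at hcab
      exact absurd (h a b c ha hb hc (Ne.symm hba) (Ne.symm hcab.1) (Ne.symm hcab.2)) (by simp)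

/-- color classes intersected with a neighborhood are small (claw-freeness) -/
lemma color_class_small (hcf : ClawFree G) {x : V} {S : Set V} {n : ℕ} {c : V → Fin n}
    (hc : PC G S c) (i : Fin n) :
    ({v | G.Adj x v ∧ v ∈ S ∧ c v = i}).Finite ∧
      ({v | G.Adj x v ∧ v ∈ S ∧ c v = i}).ncard ≤ 2 := by
  apply small_of_no_triple
  rintro a b d ⟨haa, haS, hac⟩ ⟨hba, hbS, hbc⟩ ⟨hda, hdS, hdc⟩ hab had hbd
  have nab : ¬ G.Adj a b := fun h => hc haS hbS h (hac.trans hbc.symm)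
  have nad : ¬ G.Adj a d := fun h => hc haS hdS h (hac.trans hdc.symm)
  have nbd : ¬ G.Adj b d := fun h => hc hbS hdS h (hbc.trans hdc.symm)
  exact no_indep_triple hcf haa hba hda hab had hbd nab nad nbd

lemma exists_color_nbr (h7 : ¬ G.Colorable 6) {x y : V} (hadj : G.Adj x y)
    {c : V → Fin 5} (hc : PC G {x, y}ᶜ c) (i : Fin 5) :
    ∃ v, G.Adj x v ∧ v ≠ y ∧ c v = i := by
  by_contra hno
  push_neg at hno
  apply h7
  classical
  refine ⟨SimpleGraph.Coloring.mk
    (fun v => if v = x then i.castSucc else if v = y then Fin.last 5 else (c v).castSucc) ?_⟩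
  intro u v huv
  have hxy : x ≠ y := hadj.ne
  by_cases hux : u = x
  · have hvx : v ≠ x := fun h => G.irrefl ((hux.trans h.symm) ▸ huv)
    rw [if_pos hux, if_neg hvx]
    by_cases hvy : v = y
    · rw [if_pos hvy]
      exact (Fin.castSucc_lt_last i).ne
    · rw [if_neg hvy]
      intro h
      exact hno v (hux ▸ huv) hvy (Fin.castSucc_injective 5 h).symm
  · rw [if_neg hux]
    by_cases hvx : v = x
    · rw [if_pos hvx]
      by_cases huy : u = y
      · rw [if_pos huy]
        exact (Fin.castSucc_lt_last i).ne'
      · rw [if_neg huy]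
        intro h
        exact hno u (hvx ▸ huv.symm) huy (Fin.castSucc_injective 5 h)
    · rw [if_neg hvx]
      by_cases huy : u = y
      · have hvy : v ≠ y := fun h => G.irrefl ((huy.trans h.symm) ▸ huv)
        rw [if_pos huy, if_neg hvy]
        exact (Fin.castSucc_lt_last (c v)).ne'
      · rw [if_neg huy]
        by_cases hvy : v = y
        · rw [if_pos hvy]
          exact (Fin.castSucc_lt_last (c u)).ne
        · rw [if_neg hvy]
          intro h
          exact hc (mem_pairc.2 ⟨hux, huy⟩) (mem_pairc.2 ⟨hvx, hvy⟩) huv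
            (Fin.castSucc_injective 5 h)

lemma exists_common_nbr (h7 : ¬ G.Colorable 6) {x y : V} (hadj : G.Adj x y)
    {c : V → Fin 5} (hc : PC G {x, y}ᶜ c) (i : Fin 5) :
    ∃ v, G.Adj x v ∧ G.Adj y v ∧ c v = i := by
  by_contra hno
  push_neg at hno
  apply h7
  classical
  have hxy : x ≠ y := hadj.ne
  refine ⟨SimpleGraph.Coloring.mk
    (fun v => if v = y then i.castSucc else
      if v = x ∨ (G.Adj y v ∧ c v = i) then Fin.last 5 else (c v).castSucc) ?_⟩
  intro u v huv
  by_cases huy : u = y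
  · have hvy : v ≠ y := fun h => G.irrefl ((huy.trans h.symm) ▸ huv)
    rw [if_pos huy, if_neg hvy]
    by_cases hv2 : v = x ∨ (G.Adj y v ∧ c v = i)
    · rw [if_pos hv2]; exact (Fin.castSucc_lt_last i).ne
    · rw [if_neg hv2]
      push_neg at hv2
      intro h
      exact (hv2.2 (huy ▸ huv)) (Fin.castSucc_injective 5 h).symm
  · rw [if_neg huy]
    by_cases hvy : v = y
    · rw [if_pos hvy]
      by_cases hu2 : u = x ∨ (G.Adj y u ∧ c u = i)
      · rw [if_pos hu2]; exact (Fin.castSucc_lt_last i).ne'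
      · rw [if_neg hu2]
        push_neg at hu2
        intro h
        exact (hu2.2 (hvy ▸ huv.symm)) (Fin.castSucc_injective 5 h)
    · rw [if_neg hvy]
      by_cases hu2 : u = x ∨ (G.Adj y u ∧ c u = i)
      · rw [if_pos hu2]
        by_cases hv2 : v = x ∨ (G.Adj y v ∧ c v = i)
        · rw [if_pos hv2]
          exfalso
          rcases hu2 with hux | ⟨hyu, hcu⟩
          · rcases hv2 with hvx | ⟨hyv, hcv⟩
            · exact G.irrefl ((hux.trans hvx.symm) ▸ huv)
            · exact hno v (hux ▸ huv) hyv hcv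
          · rcases hv2 with hvx | ⟨hyv, hcv⟩
            · exact hno u (hvx ▸ huv.symm) hyu hcu
            · by_cases hux : u = x
              · exact hno v (hux ▸ huv) hyv hcv
              · by_cases hvx : v = x
                · exact hno u (hvx ▸ huv.symm) hyu hcu
                · exact hc (mem_pairc.2 ⟨hux, huy⟩) (mem_pairc.2 ⟨hvx, hvy⟩) huv
                    (hcu.trans hcv.symm)
        · rw [if_neg hv2]
          exact (Fin.castSucc_lt_last (c v)).ne'
      · rw [if_neg hu2]
        by_cases hv2 : v = x ∨ (G.Adj y v ∧ c v = i)
        · rw [if_pos hv2]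
          exact (Fin.castSucc_lt_last (c u)).ne
        · rw [if_neg hv2]
          push_neg at hu2
          push_neg at hv2
          intro h
          exact hc (mem_pairc.2 ⟨hu2.1, huy⟩) (mem_pairc.2 ⟨hv2.1, hvy⟩) huv
            (Fin.castSucc_injective 5 h)

lemma no_six_clique {x y : V} {c : V → Fin 5} (hc : PC G {x, y}ᶜ c) {S : Set V}
    (hS : ∀ u ∈ S, ∀ v ∈ S, u ≠ v → G.Adj u v) (hsub : S ⊆ {x, y}ᶜ)
    (h6 : 6 ≤ S.ncard) : False := by
  have hinj : Set.InjOn c S := by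
    intro u hu v hv he
    by_contra hne
    exact hc (hsub hu) (hsub hv) (hS u hu v hv hne) he
  have h1 : (c '' S).ncard = S.ncard := Set.ncard_image_of_injOn hinj
  have hle : (c '' S).ncard ≤ (Set.univ : Set (Fin 5)).ncard :=
    Set.ncard_le_ncard (Set.subset_univ _) Set.finite_univ
  rw [h1, Set.ncard_univ] at hle
  simp only [Nat.card_eq_fintype_card, Fintype.card_fin] at hle
  omega


lemma nbhd_finite (hcf : ClawFree G)
    (hDC : ∀ x y : V, G.Adj x y → ∃ c : V → Fin 5, PC G {x, y}ᶜ c)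
    (hnb : ∀ v : V, ∃ w, G.Adj v w) (x : V) : (G.neighborSet x).Finite := by
  obtain ⟨y, hy⟩ := hnb x
  obtain ⟨c, hc⟩ := hDC x y hy
  have hsub : G.neighborSet x ⊆
      {y} ∪ ⋃ i : Fin 5, {v | G.Adj x v ∧ v ∈ ({x, y}ᶜ : Set V) ∧ c v = i} := by
    intro v hv
    rw [SimpleGraph.mem_neighborSet] at hv
    by_cases hvy : v = y
    · exact Or.inl hvy
    · refine Or.inr (Set.mem_iUnion.2 ⟨c v, hv, mem_pairc.2 ⟨(hv.ne).symm, hvy⟩, rfl⟩)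
  exact Set.Finite.subset
    (Set.Finite.union (Set.finite_singleton y)
      (Set.finite_iUnion (fun i => (color_class_small hcf hc i).1))) hsub

lemma six_le_deg (hcf : ClawFree G) (h7 : ¬ G.Colorable 6)
    (hDC : ∀ x y : V, G.Adj x y → ∃ c : V → Fin 5, PC G {x, y}ᶜ c)
    (hnb : ∀ v : V, ∃ w, G.Adj v w) (x : V) : 6 ≤ (G.neighborSet x).ncard := by
  obtain ⟨y, hy⟩ := hnb x
  obtain ⟨c, hc⟩ := hDC x y hy
  classical
  obtain ⟨f, hfs⟩ : ∃ f : Fin 5 → V, ∀ i, G.Adj x (f i) ∧ f i ≠ y ∧ c (f i) = i :=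
    ⟨fun i => (exists_color_nbr h7 hy hc i).choose,
     fun i => (exists_color_nbr h7 hy hc i).choose_spec⟩
  have hinj : Function.Injective f := by
    intro i j hij
    have := (hfs i).2.2
    rw [hij, (hfs j).2.2] at this
    exact this.symm
  have hyr : y ∉ Set.range f := by
    rintro ⟨i, rfl⟩
    exact (hfs i).2.1 rfl
  have hrf : (Set.range f).Finite := Set.finite_range f
  have hsub : insert y (Set.range f) ⊆ G.neighborSet x := by
    rintro v (rfl | ⟨i, rfl⟩)
    · exact hy
    · exact (hfs i).1
  have hcard : (insert y (Set.range f)).ncard = 6 := by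
    rw [Set.ncard_insert_of_notMem hyr hrf]
    have : (Set.range f).ncard = 5 := by
      rw [← Set.image_univ, Set.ncard_image_of_injOn (hinj.injOn)]
      simp [Set.ncard_univ]
    omega
  calc (6 : ℕ) = (insert y (Set.range f)).ncard := hcard.symm
    _ ≤ (G.neighborSet x).ncard :=
      Set.ncard_le_ncard hsub (nbhd_finite hcf hDC hnb x)

/-- five distinct common neighbours: bound on non-neighbours of `y` inside `N(x)` -/
lemma nonnbr_ncard_le (hcf : ClawFree G) (h7 : ¬ G.Colorable 6)
    (hDC : ∀ x y : V, G.Adj x y → ∃ c : V → Fin 5, PC G {x, y}ᶜ c)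
    (hnb : ∀ v : V, ∃ w, G.Adj v w) {x y : V} (hadj : G.Adj x y) :
    {w | G.Adj x w ∧ w ≠ y ∧ ¬ G.Adj y w}.ncard + 6 ≤ (G.neighborSet x).ncard := by
  classical
  obtain ⟨c, hc⟩ := hDC x y hadj
  obtain ⟨f, hfs⟩ : ∃ f : Fin 5 → V, ∀ i, G.Adj x (f i) ∧ G.Adj y (f i) ∧ c (f i) = i :=
    ⟨fun i => (exists_common_nbr h7 hadj hc i).choose,
     fun i => (exists_common_nbr h7 hadj hc i).choose_spec⟩
  have hinj : Function.Injective f := by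
    intro i j hij
    have := (hfs i).2.2
    rw [hij, (hfs j).2.2] at this
    exact this.symm
  have hrcard : (Set.range f).ncard = 5 := by
    rw [← Set.image_univ, Set.ncard_image_of_injOn (hinj.injOn)]
    simp [Set.ncard_univ]
  have hM : {w | G.Adj x w ∧ w ≠ y ∧ ¬ G.Adj y w} = {w | G.Adj x w ∧ w ≠ y ∧ ¬ G.Adj y w} := rfl
  set M := {w | G.Adj x w ∧ w ≠ y ∧ ¬ G.Adj y w}
  have hMfin : M.Finite := (nbhd_finite hcf hDC hnb x).subset (fun w hw => hw.1)
  have hdisj : Disjoint (Set.range f) M := by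
    rw [Set.disjoint_left]
    rintro w ⟨i, rfl⟩ hwM
    exact hwM.2.2 (hfs i).2.1
  have hsub : Set.range f ∪ M ⊆ G.neighborSet x \ {y} := by
    rintro w (⟨i, rfl⟩ | hwM)
    · exact ⟨(hfs i).1, fun h => (hfs i).2.1.ne' (Set.mem_singleton_iff.1 h)⟩
    · exact ⟨hwM.1, fun h => hwM.2.1 (Set.mem_singleton_iff.1 h)⟩
  have hNfin : (G.neighborSet x).Finite := nbhd_finite hcf hDC hnb x
  have h1 : (Set.range f ∪ M).ncard = 5 + M.ncard := by
    rw [Set.ncard_union_eq hdisj (Set.finite_range f) hMfin, hrcard]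
  have h2 : (Set.range f ∪ M).ncard ≤ (G.neighborSet x \ {y}).ncard :=
    Set.ncard_le_ncard hsub (hNfin.subset Set.diff_subset)
  have h3 : (G.neighborSet x \ {y}).ncard = (G.neighborSet x).ncard - 1 :=
    Set.ncard_diff_singleton_of_mem hadj
  have h4 : 1 ≤ (G.neighborSet x).ncard := by
    have := six_le_deg hcf h7 hDC hnb x; omega
  omega

/-- the recolouring trick: no vertex in `N(x)` has a *unique* non-neighbour in `N(x)` -/
lemma no_unique_nonnbr (h7 : ¬ G.Colorable 6)
    (hDC : ∀ x y : V, G.Adj x y → ∃ c : V → Fin 5, PC G {x, y}ᶜ c)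
    {x v u : V} (hxv : G.Adj x v) (hxu : G.Adj x u)
    (hvu : ¬ G.Adj v u) (hne : v ≠ u)
    (hall : ∀ w, G.Adj x w → w ≠ v → w ≠ u → G.Adj v w) : False := by
  obtain ⟨c, hc⟩ := hDC x u hxu
  obtain ⟨w, hxw, huw, hcw⟩ := exists_common_nbr h7 hxu hc (c v)
  have hwv : w ≠ v := fun h => hvu (h ▸ huw).symm
  have hwu : w ≠ u := fun h => G.irrefl (h ▸ huw)
  have hvw : G.Adj v w := hall w hxw hwv hwu
  exact hc (mem_pairc.2 ⟨(hxv.ne).symm, hne⟩) (mem_pairc.2 ⟨(hxw.ne).symm, hwu⟩) hvw hcw.symm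


lemma ncard_le_sum_of_cover {ι : Type*} [Fintype ι] {s : Set V} (hs : s.Finite)
    {D : ι → Set V} (hD : ∀ i, (D i).Finite) (hsub : s ⊆ ⋃ i, D i) :
    s.ncard ≤ ∑ i : ι, (D i).ncard := by
  classical
  have hsubF : hs.toFinset ⊆ Finset.univ.biUnion (fun i => (hD i).toFinset) := by
    intro v hv
    rw [Set.Finite.mem_toFinset] at hv
    obtain ⟨i, hvt⟩ := Set.mem_iUnion.1 (hsub hv)
    exact Finset.mem_biUnion.2 ⟨i, Finset.mem_univ i, (hD i).mem_toFinset.2 hvt⟩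
  calc s.ncard = hs.toFinset.card := Set.ncard_eq_toFinset_card s hs
    _ ≤ (Finset.univ.biUnion (fun i => (hD i).toFinset)).card := Finset.card_le_card hsubF
    _ ≤ ∑ i : ι, ((hD i).toFinset).card := Finset.card_biUnion_le
    _ = ∑ i : ι, (D i).ncard :=
      Finset.sum_congr rfl fun i _ => (Set.ncard_eq_toFinset_card _ (hD i)).symm

lemma sum5_bound {k : ℕ} {f : Fin 5 → ℕ} {i j : Fin 5} (hij : i ≠ j) (hi : f i = 0)
    (hjk : f j ≤ k) (hall : ∀ t, f t ≤ 2) : ∑ t, f t ≤ k + 6 := by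
  classical
  have hji : j ∈ Finset.univ.erase i := Finset.mem_erase.2 ⟨Ne.symm hij, Finset.mem_univ j⟩
  rw [← Finset.add_sum_erase _ f (Finset.mem_univ i), ← Finset.add_sum_erase _ f hji]
  have hb : ∑ t ∈ (Finset.univ.erase i).erase j, f t ≤ ((Finset.univ.erase i).erase j).card • 2 :=
    Finset.sum_le_card_nsmul _ _ 2 (fun t _ => hall t)
  have hcard : ((Finset.univ.erase i).erase j).card = 3 := by
    rw [Finset.card_erase_of_mem hji, Finset.card_erase_of_mem (Finset.mem_univ i)]
    simp
  rw [hcard] at hb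
  simp only [smul_eq_mul] at hb
  omega

lemma sum5_bound0 {f : Fin 5 → ℕ} {i : Fin 5} (hi : f i = 0)
    (hall : ∀ t, f t ≤ 2) : ∑ t, f t ≤ 8 := by
  classical
  rw [← Finset.add_sum_erase _ f (Finset.mem_univ i)]
  have hb : ∑ t ∈ Finset.univ.erase i, f t ≤ (Finset.univ.erase i).card • 2 :=
    Finset.sum_le_card_nsmul _ _ 2 (fun t _ => hall t)
  have hcard : (Finset.univ.erase i).card = 4 := by
    rw [Finset.card_erase_of_mem (Finset.mem_univ i)]
    simp
  rw [hcard] at hb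
  simp only [smul_eq_mul] at hb
  omega

lemma even_aux (m : V → V) : ∀ n : ℕ, ∀ S : Set V, S.Finite →
    (∀ y ∈ S, m y ∈ S ∧ m y ≠ y ∧ m (m y) = y) → S.ncard = n → Even n := by
  intro n
  induction n using Nat.strong_induction_on with
  | _ n ih =>
    intro S hfin hm hn
    rcases S.eq_empty_or_nonempty with rfl | ⟨y, hy⟩
    · simp only [Set.ncard_empty] at hn
      exact hn ▸ Even.zero
    · obtain ⟨hmy, hne, hinv⟩ := hm y hy
      have hpair : ({y, m y} : Set V) ⊆ S := by
        rintro v (rfl | hv)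
        · exact hy
        · exact (Set.mem_singleton_iff.1 hv) ▸ hmy
      have hps : ({y, m y} : Set V).ncard = 2 := Set.ncard_pair (Ne.symm hne)
      have h2 : 2 ≤ n := by
        rw [← hn, ← hps]
        exact Set.ncard_le_ncard hpair hfin
      have hfin' : (S \ {y, m y}).Finite := hfin.diff
      have hn' : (S \ {y, m y}).ncard = n - 2 := by
        rw [Set.ncard_diff hpair, hps, hn]
      have hm' : ∀ w ∈ S \ {y, m y}, m w ∈ S \ {y, m y} ∧ m w ≠ w ∧ m (m w) = w := by
        intro w hw
        obtain ⟨hw1, hw2⟩ := hw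
        obtain ⟨h1, h2', h3⟩ := hm w hw1
        refine ⟨⟨h1, ?_⟩, h2', h3⟩
        intro hmem
        rcases Set.mem_insert_iff.1 hmem with h | h
        · exact hw2 (Or.inr (Set.mem_singleton_iff.2 (by rw [← h3, h])))
        · rw [Set.mem_singleton_iff] at h
          exact hw2 (Or.inl (by rw [← h3, h, hinv]))
      obtain ⟨t, ht⟩ := ih (n - 2) (by omega) (S \ {y, m y}) hfin' hm' hn'
      exact ⟨t + 1, by omega⟩

def Good {V : Type*} (G : SimpleGraph V) (x : V) : Prop :=
  ∃ a b : V, G.Adj a b ∧ ¬ G.Adj x a ∧ ¬ G.Adj x b ∧ a ≠ x ∧ b ≠ x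

lemma mainx (hcf : ClawFree G) (h7 : ¬ G.Colorable 6)
    (hDC : ∀ x y : V, G.Adj x y → ∃ c : V → Fin 5, PC G {x, y}ᶜ c)
    (hnb : ∀ v : V, ∃ w, G.Adj v w) {x : V} (hx : Good G x) :
    (G.neighborSet x).ncard = 8 ∧
    (∀ y, G.Adj x y → {w | G.Adj x w ∧ w ≠ y ∧ ¬ G.Adj y w}.ncard = 2) ∧
    ∃ m : V → V, ∀ y, G.Adj x y →
      G.Adj x (m y) ∧ m y ≠ y ∧ ¬ G.Adj y (m y) ∧ m (m y) = y := by
  classical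
  obtain ⟨a, b, hab, hxa, hxb, hax, hbx⟩ := hx
  obtain ⟨c, hc⟩ := hDC a b hab
  have hNfin : (G.neighborSet x).Finite := nbhd_finite hcf hDC hnb x
  have hmemc : ∀ w, G.Adj x w → w ∈ ({a, b}ᶜ : Set V) := fun w hw =>
    mem_pairc.2 ⟨fun h => hxa (h ▸ hw), fun h => hxb (h ▸ hw)⟩
  have hxmem : x ∈ ({a, b}ᶜ : Set V) := mem_pairc.2 ⟨fun h => hax h.symm, fun h => hbx h.symm⟩
  set D : Fin 5 → Set V := fun i => {v | G.Adj x v ∧ v ∈ ({a, b}ᶜ : Set V) ∧ c v = i} with hD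
  have hDfin : ∀ i, (D i).Finite := fun i => (color_class_small hcf hc i).1
  have hDle : ∀ i, (D i).ncard ≤ 2 := fun i => (color_class_small hcf hc i).2
  have hDx : (D (c x)).ncard = 0 := by
    have : D (c x) = ∅ := by
      ext v
      simp only [hD, Set.mem_setOf_eq, Set.mem_empty_iff_false, iff_false, not_and]
      intro hv hvc hvcx
      exact hc hvc hxmem hv.symm hvcx
    rw [this, Set.ncard_empty]
  have hcov : G.neighborSet x ⊆ ⋃ i, D i := fun v hv =>
    Set.mem_iUnion.2 ⟨c v, hv, hmemc v hv, rfl⟩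
  have hcovle : (G.neighborSet x).ncard ≤ ∑ i : Fin 5, (D i).ncard :=
    ncard_le_sum_of_cover hNfin hDfin hcov
  have hdegle : (G.neighborSet x).ncard ≤ 8 :=
    le_trans hcovle (sum5_bound0 hDx hDle)
  have h6 := six_le_deg hcf h7 hDC hnb x
  -- the "all neighbours pairwise adjacent" situation is impossible
  have hclique : ¬ (∀ y, G.Adj x y → ∀ w, G.Adj x w → w ≠ y → G.Adj y w) := by
    intro hall
    have hpair : ∀ u ∈ insert x (G.neighborSet x), ∀ v ∈ insert x (G.neighborSet x),
        u ≠ v → G.Adj u v := by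
      intro u hu v hv huv
      simp only [Set.mem_insert_iff, SimpleGraph.mem_neighborSet] at hu hv
      rcases hu with rfl | hu <;> rcases hv with rfl | hv
      · exact absurd rfl huv
      · exact hv
      · exact hu.symm
      · exact hall u hu v hv (Ne.symm huv)
    refine no_six_clique (S := insert x (G.neighborSet x)) hc hpair ?_ ?_
    · intro v hv
      rcases hv with rfl | hv
      · exact hxmem
      · exact hmemc v hv
    · have hins : (insert x (G.neighborSet x)).ncard = (G.neighborSet x).ncard + 1 :=
        Set.ncard_insert_of_notMem (fun h => G.irrefl h) hNfin
      omega
  -- no vertex of N(x) has a unique non-neighbour in N(x)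
  have hnouniq : ∀ y, G.Adj x y →
      {w | G.Adj x w ∧ w ≠ y ∧ ¬ G.Adj y w}.ncard ≠ 1 := by
    intro y hy h1
    obtain ⟨u, hu⟩ := Set.ncard_eq_one.1 h1
    have huNN : u ∈ {w | G.Adj x w ∧ w ≠ y ∧ ¬ G.Adj y w} := hu ▸ rfl
    refine no_unique_nonnbr h7 hDC hy huNN.1 huNN.2.2 (Ne.symm huNN.2.1) ?_
    intro w hw hwy hwu
    by_contra hnadj
    have : w ∈ {w | G.Adj x w ∧ w ≠ y ∧ ¬ G.Adj y w} := ⟨hw, hwy, hnadj⟩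
    rw [hu, Set.mem_singleton_iff] at this
    exact hwu this
  have hdeg8 : (G.neighborSet x).ncard = 8 := by
    by_contra hne8
    apply hclique
    intro y hy w hw hwy
    by_contra hnadj
    have hNN := nonnbr_ncard_le hcf h7 hDC hnb hy
    have hwNN : w ∈ {w' | G.Adj x w' ∧ w' ≠ y ∧ ¬ G.Adj y w'} := ⟨hw, hwy, hnadj⟩
    have hfinNN : {w' | G.Adj x w' ∧ w' ≠ y ∧ ¬ G.Adj y w'}.Finite :=
      hNfin.subset (fun z hz => hz.1)
    have hpos : 0 < {w' | G.Adj x w' ∧ w' ≠ y ∧ ¬ G.Adj y w'}.ncard :=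
      (Set.ncard_pos hfinNN).2 ⟨w, hwNN⟩
    have := hnouniq y hy
    omega
  -- color classes of neighbours have exactly two elements
  have hymem : ∀ y, G.Adj x y → y ∈ D (c y) := fun y hy => ⟨hy, hmemc y hy, rfl⟩
  have hcyx : ∀ y, G.Adj x y → c y ≠ c x := by
    intro y hy h
    have : y ∈ D (c x) := h ▸ hymem y hy
    have h0 := hDx
    rw [Set.ncard_eq_zero ((hDfin (c x)))] at h0
    rw [h0] at this
    exact this
  have hD2 : ∀ y, G.Adj x y → (D (c y)).ncard = 2 := by
    intro y hy
    by_contra hne2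
    have hle1 : (D (c y)).ncard ≤ 1 := by have := hDle (c y); omega
    have hup : ∑ i : Fin 5, (D i).ncard ≤ 7 :=
      sum5_bound (f := fun i => (D i).ncard) (Ne.symm (hcyx y hy)) hDx hle1 hDle
    rw [hdeg8] at hcovle
    omega
  -- the matching function
  have hother : ∀ y, G.Adj x y → ∃ y', y' ∈ D (c y) ∧ y' ≠ y := by
    intro y hy
    obtain ⟨p, q, hpq, hDpq⟩ := Set.ncard_eq_two.1 (hD2 y hy)
    have hymem' := hymem y hy
    rw [hDpq] at hymem'
    rcases hymem' with rfl | h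
    · exact ⟨q, by rw [hDpq]; right; rfl, Ne.symm hpq⟩
    · rw [Set.mem_singleton_iff] at h
      subst h
      exact ⟨p, by rw [hDpq]; left; rfl, hpq⟩
  set m : V → V := fun y => if h : ∃ y', y' ∈ D (c y) ∧ y' ≠ y then h.choose else y with hm
  have hmspec : ∀ y, G.Adj x y → m y ∈ D (c y) ∧ m y ≠ y := by
    intro y hy
    have h := hother y hy
    simp only [hm, dif_pos h]
    exact h.choose_spec
  have hmadj : ∀ y, G.Adj x y → G.Adj x (m y) := fun y hy => (hmspec y hy).1.1
  have hmc : ∀ y, G.Adj x y → c (m y) = c y := fun y hy => (hmspec y hy).1.2.2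
  have hmnadj : ∀ y, G.Adj x y → ¬ G.Adj y (m y) := by
    intro y hy hadj
    exact hc (hmemc y hy) (hmemc _ (hmadj y hy)) hadj (hmc y hy).symm
  have hpaireq : ∀ y, G.Adj x y → D (c y) = {y, m y} := by
    intro y hy
    obtain ⟨p, q, hpq, hDpq⟩ := Set.ncard_eq_two.1 (hD2 y hy)
    have h1 := hymem y hy
    have h2 := (hmspec y hy).1
    have hne := (hmspec y hy).2
    rw [hDpq] at h1 h2 ⊢
    rcases h1 with rfl | h1
    · rcases h2 with h2 | h2
      · exact absurd h2 hne
      · rw [Set.mem_singleton_iff] at h2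
        rw [h2]
    · rw [Set.mem_singleton_iff] at h1
      subst h1
      rcases h2 with h2 | h2
      · rw [h2, Set.pair_comm]
      · rw [Set.mem_singleton_iff] at h2
        exact absurd h2 hne
  have hminv : ∀ y, G.Adj x y → m (m y) = y := by
    intro y hy
    have h1 := hmspec _ (hmadj y hy)
    have h2 : D (c (m y)) = D (c y) := by rw [hmc y hy]
    rw [h2, hpaireq y hy] at h1
    rcases h1.1 with h | h
    · exact h
    · rw [Set.mem_singleton_iff] at h
      exact absurd h h1.2
  exact ⟨hdeg8, fun y hy => by
    have hNN := nonnbr_ncard_le hcf h7 hDC hnb hy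
    rw [hdeg8] at hNN
    have hmNN : m y ∈ {w | G.Adj x w ∧ w ≠ y ∧ ¬ G.Adj y w} :=
      ⟨hmadj y hy, (hmspec y hy).2, hmnadj y hy⟩
    have hfinNN : {w | G.Adj x w ∧ w ≠ y ∧ ¬ G.Adj y w}.Finite :=
      hNfin.subset (fun z hz => hz.1)
    have hpos : 0 < {w | G.Adj x w ∧ w ≠ y ∧ ¬ G.Adj y w}.ncard :=
      (Set.ncard_pos hfinNN).2 ⟨m y, hmNN⟩
    have := hnouniq y hy
    omega,
    ⟨m, fun y hy => ⟨hmadj y hy, (hmspec y hy).2, hmnadj y hy, hminv y hy⟩⟩⟩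


def Su (G : SimpleGraph V) (x u : V) : Set V :=
  G.neighborSet u \ insert x (G.neighborSet x)

lemma mem_su {G : SimpleGraph V} {x u s : V} :
    s ∈ Su G x u ↔ G.Adj u s ∧ s ≠ x ∧ ¬ G.Adj x s := by
  simp only [Su, Set.mem_diff, SimpleGraph.mem_neighborSet, Set.mem_insert_iff, not_or]

lemma su_structure (hcf : ClawFree G) (h7 : ¬ G.Colorable 6)
    (hDC : ∀ x y : V, G.Adj x y → ∃ c : V → Fin 5, PC G {x, y}ᶜ c)
    (hnb : ∀ v : V, ∃ w, G.Adj v w) {x : V} (hx : Good G x)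
    {u : V} (hxu : G.Adj x u) :
    Good G u ∧ (G.neighborSet u ∩ G.neighborSet x).ncard = 5 ∧ (Su G x u).ncard = 2 ∧
      (∀ s ∈ Su G x u, ∀ t ∈ Su G x u, s ≠ t → G.Adj s t) := by
  classical
  obtain ⟨h8, hreg, -⟩ := mainx hcf h7 hDC hnb hx
  have hNfinx : (G.neighborSet x).Finite := nbhd_finite hcf hDC hnb x
  have hNN2 := hreg u hxu
  obtain ⟨v, v', hvv'ne, hNNpair⟩ := Set.ncard_eq_two.1 hNN2
  have hvprop : G.Adj x v ∧ v ≠ u ∧ ¬ G.Adj u v := by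
    have : v ∈ {w | G.Adj x w ∧ w ≠ u ∧ ¬ G.Adj u w} := by
      rw [hNNpair]; exact Set.mem_insert v {v'}
    exact this
  have hv'prop : G.Adj x v' ∧ v' ≠ u ∧ ¬ G.Adj u v' := by
    have : v' ∈ {w | G.Adj x w ∧ w ≠ u ∧ ¬ G.Adj u w} := by
      rw [hNNpair]; exact Set.mem_insert_of_mem v rfl
    exact this
  have hadjvv' : G.Adj v v' := by
    by_contra hn
    exact no_indep_triple hcf hxu hvprop.1 hv'prop.1 (Ne.symm hvprop.2.1)
      (Ne.symm hv'prop.2.1) hvv'ne hvprop.2.2 hv'prop.2.2 hn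
  have hGoodu : Good G u :=
    ⟨v, v', hadjvv', hvprop.2.2, hv'prop.2.2, hvprop.2.1, hv'prop.2.1⟩
  obtain ⟨h8u, hregu, -⟩ := mainx hcf h7 hDC hnb hGoodu
  have hNfinu : (G.neighborSet u).Finite := nbhd_finite hcf hDC hnb u
  have hinter : G.neighborSet u ∩ G.neighborSet x = G.neighborSet x \ {u, v, v'} := by
    ext w
    simp only [Set.mem_inter_iff, Set.mem_diff, SimpleGraph.mem_neighborSet,
      Set.mem_insert_iff, Set.mem_singleton_iff, not_or]
    constructor
    · rintro ⟨huw, hxw⟩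
      exact ⟨hxw, ⟨fun h => G.irrefl (h ▸ huw), fun h => hvprop.2.2 (h ▸ huw),
        fun h => hv'prop.2.2 (h ▸ huw)⟩⟩
    · rintro ⟨hxw, hwu, hwv, hwv'⟩
      refine ⟨?_, hxw⟩
      by_contra hn
      have hmem : w ∈ {w | G.Adj x w ∧ w ≠ u ∧ ¬ G.Adj u w} := ⟨hxw, hwu, hn⟩
      rw [hNNpair] at hmem
      rcases hmem with h | h
      · exact hwv h
      · exact hwv' h
  have huvv' : u ∉ ({v, v'} : Set V) := by
    rintro (h | h)
    · exact hvprop.2.1 h.symm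
    · exact hv'prop.2.1 (Set.mem_singleton_iff.1 h).symm
  have hcard3 : ({u, v, v'} : Set V).ncard = 3 := by
    rw [Set.ncard_insert_of_notMem huvv' (Set.toFinite _), Set.ncard_pair hvv'ne]
  have hsub3 : ({u, v, v'} : Set V) ⊆ G.neighborSet x := by
    rintro w (rfl | rfl | h)
    · exact hxu
    · exact hvprop.1
    · rw [Set.mem_singleton_iff] at h
      exact h ▸ hv'prop.1
  have hint5 : (G.neighborSet u ∩ G.neighborSet x).ncard = 5 := by
    rw [hinter, Set.ncard_diff hsub3 (Set.toFinite _), hcard3, h8]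
  have hxinN : x ∈ G.neighborSet u := by
    rw [SimpleGraph.mem_neighborSet]; exact hxu.symm
  have hpart : (G.neighborSet u ∩ insert x (G.neighborSet x)).ncard + (Su G x u).ncard
      = (G.neighborSet u).ncard :=
    Set.ncard_inter_add_ncard_diff_eq_ncard _ _ hNfinu
  have hAeq : G.neighborSet u ∩ insert x (G.neighborSet x)
      = insert x (G.neighborSet u ∩ G.neighborSet x) := by
    ext w
    simp only [Set.mem_inter_iff, Set.mem_insert_iff]
    constructor
    · rintro ⟨hwu, rfl | hwx⟩
      · exact Or.inl rfl
      · exact Or.inr ⟨hwu, hwx⟩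
    · rintro (rfl | ⟨hwu, hwx⟩)
      · exact ⟨hxinN, Or.inl rfl⟩
      · exact ⟨hwu, Or.inr hwx⟩
  have hxnotin : x ∉ G.neighborSet u ∩ G.neighborSet x := by
    rintro ⟨-, h⟩
    exact G.irrefl h
  have hA6 : (G.neighborSet u ∩ insert x (G.neighborSet x)).ncard = 6 := by
    rw [hAeq, Set.ncard_insert_of_notMem hxnotin (hNfinu.inter_of_left _), hint5]
  have hSu2 : (Su G x u).ncard = 2 := by
    rw [hA6, h8u] at hpart
    omega
  refine ⟨hGoodu, hint5, hSu2, ?_⟩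
  intro s hs t ht hst
  rw [mem_su] at hs ht
  rcases hcf u x s t (Ne.symm hs.2.1) (Ne.symm ht.2.1) hst hxu.symm hs.1 ht.1 with
    h | h | h
  · exact absurd h hs.2.2
  · exact absurd h ht.2.2
  · exact h


lemma pair_other {s : Set V} (h2 : s.ncard = 2) {a : V} (ha : a ∈ s) :
    ∃ b, b ≠ a ∧ s = {a, b} := by
  obtain ⟨p, q, hpq, rfl⟩ := Set.ncard_eq_two.1 h2
  rcases ha with h | h
  · subst h
    exact ⟨q, Ne.symm hpq, rfl⟩
  · rw [Set.mem_singleton_iff] at h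
    subst h
    exact ⟨p, hpq, Set.pair_comm p a⟩

lemma eq_pair_of_ncard_two {s : Set V} (h2 : s.ncard = 2) (hfin : s.Finite) {a b : V}
    (ha : a ∈ s) (hb : b ∈ s) (hab : a ≠ b) : s = {a, b} :=
  (Set.eq_of_subset_of_ncard_le (by
      rintro w (rfl | h)
      · exact ha
      · exact (Set.mem_singleton_iff.1 h) ▸ hb)
    (by rw [h2, Set.ncard_pair hab]) hfin).symm

lemma z_structure (hcf : ClawFree G) (h7 : ¬ G.Colorable 6)
    (hDC : ∀ x y : V, G.Adj x y → ∃ c : V → Fin 5, PC G {x, y}ᶜ c)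
    (hnb : ∀ v : V, ∃ w, G.Adj v w) {x u z : V} (hx : Good G x) (hxu : G.Adj x u)
    (hz : z ∈ Su G x u) :
    Good G z ∧ 5 ≤ (G.neighborSet z ∩ G.neighborSet x).ncard ∧
      (G.neighborSet z ∩ G.neighborSet x).ncard ≤ 7 := by
  classical
  obtain ⟨hGu, hint5, hSu2, hSuAdj⟩ := su_structure hcf h7 hDC hnb hx hxu
  obtain ⟨h8, -, -⟩ := mainx hcf h7 hDC hnb hx
  obtain ⟨h8u, hregu, -⟩ := mainx hcf h7 hDC hnb hGu
  have hNfinx : (G.neighborSet x).Finite := nbhd_finite hcf hDC hnb x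
  have hNfinu : (G.neighborSet u).Finite := nbhd_finite hcf hDC hnb u
  have hNfinz : (G.neighborSet z).Finite := nbhd_finite hcf hDC hnb z
  have hzSu := hz
  rw [mem_su] at hz
  obtain ⟨huz, hzx, hxz⟩ := hz
  have hNN2 := hregu z huz
  have hNNfin : {w | G.Adj u w ∧ w ≠ z ∧ ¬ G.Adj z w}.Finite :=
    hNfinu.subset (fun w hw => hw.1)
  have hxmem : x ∈ {w | G.Adj u w ∧ w ≠ z ∧ ¬ G.Adj z w} :=
    ⟨hxu.symm, Ne.symm hzx, fun h => hxz h.symm⟩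
  obtain ⟨w0, hw0x, hNNeq⟩ := pair_other hNN2 hxmem
  have hw0mem : w0 ∈ {w | G.Adj u w ∧ w ≠ z ∧ ¬ G.Adj z w} := by
    rw [hNNeq]; exact Set.mem_insert_of_mem x rfl
  obtain ⟨huw0, hw0z, hzw0⟩ := hw0mem
  have hxw0 : G.Adj x w0 := by
    by_contra hn
    have hw0Su : w0 ∈ Su G x u := mem_su.2 ⟨huw0, hw0x, hn⟩
    exact hzw0 (hSuAdj z hzSu w0 hw0Su (Ne.symm hw0z))
  have hGz : Good G z :=
    ⟨x, w0, hxw0, fun h => hxz h.symm, hzw0, Ne.symm hzx, hw0z⟩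
  have hinterfin : (G.neighborSet z ∩ G.neighborSet x).Finite := hNfinz.inter_of_left _
  have hle7 : (G.neighborSet z ∩ G.neighborSet x).ncard ≤ 7 := by
    have hsub : G.neighborSet z ∩ G.neighborSet x ⊆ G.neighborSet x \ {w0} := by
      rintro w ⟨hzw, hxw⟩
      exact ⟨hxw, fun h => hzw0 ((Set.mem_singleton_iff.1 h) ▸ hzw)⟩
    have hw0N : w0 ∈ G.neighborSet x := by
      rw [SimpleGraph.mem_neighborSet]; exact hxw0
    have hd : (G.neighborSet x \ {w0}).ncard = 7 := by
      rw [Set.ncard_diff_singleton_of_mem hw0N, h8]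
    calc (G.neighborSet z ∩ G.neighborSet x).ncard
        ≤ (G.neighborSet x \ {w0}).ncard := Set.ncard_le_ncard hsub hNfinx.diff
      _ = 7 := hd
  have hge5 : 5 ≤ (G.neighborSet z ∩ G.neighborSet x).ncard := by
    have hNNxw0 : {w | G.Adj u w ∧ w ≠ z ∧ ¬ G.Adj z w} = {x, w0} := hNNeq
    have hsub : insert u ((G.neighborSet u ∩ G.neighborSet x) \ {w0})
        ⊆ G.neighborSet z ∩ G.neighborSet x := by
      rintro w (rfl | ⟨⟨hwu, hwx⟩, hww0⟩)
      · exact ⟨huz.symm, hxu⟩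
      · refine ⟨?_, hwx⟩
        show G.Adj z w
        by_contra hn
        have hwz : w ≠ z := fun h => hxz (h ▸ hwx)
        have hwmem : w ∈ {w | G.Adj u w ∧ w ≠ z ∧ ¬ G.Adj z w} := ⟨hwu, hwz, hn⟩
        rw [hNNxw0] at hwmem
        rcases hwmem with h | h
        · exact G.irrefl (h ▸ hwx)
        · exact hww0 h
      -- note: hn : ¬ G.Adj w z? careful
    have hdiff4 : 4 ≤ ((G.neighborSet u ∩ G.neighborSet x) \ {w0}).ncard := by
      have hsub2 : G.neighborSet u ∩ G.neighborSet x
          ⊆ insert w0 ((G.neighborSet u ∩ G.neighborSet x) \ {w0}) := by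
        intro w hw
        by_cases hww0 : w = w0
        · exact Or.inl hww0
        · exact Or.inr ⟨hw, hww0⟩
      have := Set.ncard_le_ncard hsub2 ((hNfinu.inter_of_left _).diff |>.insert w0)
      have h2 := Set.ncard_insert_le w0 ((G.neighborSet u ∩ G.neighborSet x) \ {w0})
      omega
    have hins : (insert u ((G.neighborSet u ∩ G.neighborSet x) \ {w0})).ncard
        = ((G.neighborSet u ∩ G.neighborSet x) \ {w0}).ncard + 1 := by
      refine Set.ncard_insert_of_notMem ?_ ((hNfinu.inter_of_left _).diff)
      rintro ⟨⟨h, -⟩, -⟩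
      exact G.irrefl h
    have := Set.ncard_le_ncard hsub hinterfin
    rw [hins] at this
    omega
  exact ⟨hGz, hge5, hle7⟩


lemma nz_split (hcf : ClawFree G) (h7 : ¬ G.Colorable 6)
    (hDC : ∀ x y : V, G.Adj x y → ∃ c : V → Fin 5, PC G {x, y}ᶜ c)
    (hnb : ∀ v : V, ∃ w, G.Adj v w) {x z : V} (hGz : Good G z) (hxz : ¬ G.Adj x z)
    {u : V} (hzu : G.Adj z u) (hxu : G.Adj x u) :
    ({w | G.Adj x w ∧ w ≠ u ∧ ¬ G.Adj u w} ∩ G.neighborSet z).ncard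
      + (Su G x z \ Su G x u).ncard = 2 := by
  classical
  obtain ⟨-, hregz, -⟩ := mainx hcf h7 hDC hnb hGz
  have hNfinz : (G.neighborSet z).Finite := nbhd_finite hcf hDC hnb z
  have hNZ2 := hregz u hzu
  have heq : {w | G.Adj z w ∧ w ≠ u ∧ ¬ G.Adj u w}
      = ({w | G.Adj x w ∧ w ≠ u ∧ ¬ G.Adj u w} ∩ G.neighborSet z)
        ∪ (Su G x z \ Su G x u) := by
    ext w
    constructor
    · rintro ⟨hzw, hwu, huw⟩
      by_cases hxw : G.Adj x w
      · exact Or.inl ⟨⟨hxw, hwu, huw⟩, hzw⟩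
      · refine Or.inr ⟨mem_su.2 ⟨hzw, ?_, hxw⟩, fun h => huw (mem_su.1 h).1⟩
        intro h
        exact hxz (h ▸ hzw).symm
    · rintro (⟨⟨hxw, hwu, huw⟩, hzw⟩ | ⟨hwSuz, hwnSu⟩)
      · exact ⟨hzw, hwu, huw⟩
      · rw [mem_su] at hwSuz
        obtain ⟨hzw, hwx, hxw⟩ := hwSuz
        refine ⟨hzw, fun h => hxw (h ▸ hxu), ?_⟩
        intro huw
        exact hwnSu (mem_su.2 ⟨huw, hwx, hxw⟩)
  have hdisj : Disjoint ({w | G.Adj x w ∧ w ≠ u ∧ ¬ G.Adj u w} ∩ G.neighborSet z)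
      (Su G x z \ Su G x u) := by
    rw [Set.disjoint_left]
    rintro w ⟨⟨hxw, -, -⟩, -⟩ ⟨hw, -⟩
    exact (mem_su.1 hw).2.2 hxw
  have hfin1 : ({w | G.Adj x w ∧ w ≠ u ∧ ¬ G.Adj u w} ∩ G.neighborSet z).Finite :=
    hNfinz.subset (fun w hw => hw.2)
  have hfin2 : (Su G x z \ Su G x u).Finite :=
    hNfinz.subset (fun w hw => by
      rw [SimpleGraph.mem_neighborSet]
      exact (mem_su.1 hw.1).1)
  rw [heq, Set.ncard_union_eq hdisj hfin1 hfin2] at hNZ2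
  exact hNZ2


lemma bipartite_count {T B : Set V} (hTfin : T.Finite) (hBfin : B.Finite) (r : V → V → Prop)
    {p q : ℕ}
    (habove : ∀ u ∈ T, p ≤ {b | b ∈ B ∧ r u b}.ncard)
    (hbelow : ∀ b ∈ B, {u | u ∈ T ∧ r u b}.ncard ≤ q) :
    T.ncard * p ≤ B.ncard * q := by
  classical
  have h := Finset.card_nsmul_le_card_nsmul (s := hTfin.toFinset) (t := hBfin.toFinset)
    (r := r) (m := p) (n := q) ?_ ?_
  · rw [smul_eq_mul, smul_eq_mul] at h
    rwa [Set.ncard_eq_toFinset_card T hTfin, Set.ncard_eq_toFinset_card B hBfin]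
  · intro a ha
    rw [Set.Finite.mem_toFinset] at ha
    have hseteq : {b | b ∈ B ∧ r a b} = ↑(hBfin.toFinset.filter (fun b => r a b)) := by
      ext b
      simp [Set.Finite.mem_toFinset]
    have h2 := habove a ha
    rw [hseteq, Set.ncard_coe_finset] at h2
    exact h2
  · intro b hb
    rw [Set.Finite.mem_toFinset] at hb
    have hseteq : {u | u ∈ T ∧ r u b} = ↑(hTfin.toFinset.filter (fun a => r a b)) := by
      ext u
      simp [Set.Finite.mem_toFinset]
    have h2 := hbelow b hb
    rw [hseteq, Set.ncard_coe_finset] at h2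
    exact h2

lemma kill_small (hcf : ClawFree G) (h7 : ¬ G.Colorable 6)
    (hDC : ∀ x y : V, G.Adj x y → ∃ c : V → Fin 5, PC G {x, y}ᶜ c)
    (hnb : ∀ v : V, ∃ w, G.Adj v w) {x u0 z : V} (hx : Good G x) (hxu0 : G.Adj x u0)
    (hz : z ∈ Su G x u0)
    (hd : (G.neighborSet z ∩ G.neighborSet x).ncard = 5
      ∨ (G.neighborSet z ∩ G.neighborSet x).ncard = 6) : False := by
  classical
  obtain ⟨hGz, -, -⟩ := z_structure hcf h7 hDC hnb hx hxu0 hz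
  obtain ⟨h8, hregx, -⟩ := mainx hcf h7 hDC hnb hx
  obtain ⟨h8z, -, -⟩ := mainx hcf h7 hDC hnb hGz
  have hNfinx : (G.neighborSet x).Finite := nbhd_finite hcf hDC hnb x
  have hNfinz : (G.neighborSet z).Finite := nbhd_finite hcf hDC hnb z
  obtain ⟨hzu0adj, hzx, hxz⟩ := mem_su.1 hz
  set T := G.neighborSet z ∩ G.neighborSet x with hT
  set B := G.neighborSet x \ T with hB
  have hTfin : T.Finite := hNfinz.inter_of_left _
  have hBfin : B.Finite := hNfinx.diff
  have hBcard : B.ncard = 8 - T.ncard := by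
    rw [hB, Set.ncard_diff (Set.inter_subset_right) hTfin, h8]
  -- ncard of Su x z
  have hSuzcard : (Su G x z).ncard = 8 - T.ncard := by
    have hpart : (G.neighborSet z ∩ insert x (G.neighborSet x)).ncard + (Su G x z).ncard
        = (G.neighborSet z).ncard :=
      Set.ncard_inter_add_ncard_diff_eq_ncard _ _ hNfinz
    have heq : G.neighborSet z ∩ insert x (G.neighborSet x) = T := by
      ext w
      simp only [Set.mem_inter_iff, Set.mem_insert_iff, hT, SimpleGraph.mem_neighborSet]
      constructor
      · rintro ⟨hzw, rfl | hxw⟩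
        · exact absurd hzw.symm hxz
        · exact ⟨hzw, hxw⟩
      · rintro ⟨hzw, hxw⟩
        exact ⟨hzw, Or.inr hxw⟩
    rw [heq, h8z] at hpart
    have hTle : T.ncard ≤ 8 := by
      rw [← h8z]
      exact Set.ncard_le_ncard Set.inter_subset_left hNfinz
    omega
  -- main per-vertex equation
  have hkey : ∀ u ∈ T, ({w | G.Adj x w ∧ w ≠ u ∧ ¬ G.Adj u w} ∩ G.neighborSet z).ncard
      + (Su G x z \ Su G x u).ncard = 2 := by
    rintro u ⟨hzu, hxu⟩
    exact nz_split hcf h7 hDC hnb hGz hxz hzu hxu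
  have hSuzfin : (Su G x z).Finite := hNfinz.subset (fun w hw => by
    rw [SimpleGraph.mem_neighborSet]; exact (mem_su.1 hw).1)
  -- intersection of the two Su's is small
  have hSuInt : ∀ u ∈ T, (Su G x z \ Su G x u).ncard + 1 ≥ (Su G x z).ncard := by
    rintro u ⟨hzu, hxu⟩
    rw [SimpleGraph.mem_neighborSet] at hzu hxu
    have hzmem : z ∈ Su G x u := mem_su.2 ⟨hzu.symm, hzx, hxz⟩
    obtain ⟨-, -, hSu2, -⟩ := su_structure hcf h7 hDC hnb hx hxu
    have hsub : Su G x z ∩ Su G x u ⊆ Su G x u \ {z} := by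
      rintro w ⟨hw1, hw2⟩
      refine ⟨hw2, fun h => ?_⟩
      rw [Set.mem_singleton_iff] at h
      subst h
      exact G.irrefl (mem_su.1 hw1).1
    have hfinSuu : (Su G x u).Finite :=
      (nbhd_finite hcf hDC hnb u).subset (fun w hw => by
        rw [SimpleGraph.mem_neighborSet]; exact (mem_su.1 hw).1)
    have h1 : (Su G x u \ {z}).ncard = 1 := by
      rw [Set.ncard_diff_singleton_of_mem hzmem, hSu2]
    have h2 : (Su G x z ∩ Su G x u).ncard ≤ 1 := by
      calc (Su G x z ∩ Su G x u).ncard ≤ (Su G x u \ {z}).ncard :=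
            Set.ncard_le_ncard hsub hfinSuu.diff
        _ = 1 := h1
    have h3 : (Su G x z ∩ Su G x u).ncard + (Su G x z \ Su G x u).ncard = (Su G x z).ncard :=
      Set.ncard_inter_add_ncard_diff_eq_ncard _ _ hSuzfin
    omega
  have hNNfin : ∀ u : V, {w | G.Adj x w ∧ w ≠ u ∧ ¬ G.Adj u w}.Finite :=
    fun u => hNfinx.subset (fun w hw => hw.1)
  have hNNprops : ∀ u ∈ T, ({w | G.Adj x w ∧ w ≠ u ∧ ¬ G.Adj u w} ∩ G.neighborSet z).ncard +
      ({w | G.Adj x w ∧ w ≠ u ∧ ¬ G.Adj u w} \ G.neighborSet z).ncard = 2 := by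
    rintro u ⟨hzu, hxu⟩
    rw [SimpleGraph.mem_neighborSet] at hxu
    have h := Set.ncard_inter_add_ncard_diff_eq_ncard
      {w | G.Adj x w ∧ w ≠ u ∧ ¬ G.Adj u w} (G.neighborSet z) (hNNfin u)
    rw [hregx u hxu] at h
    exact h
  have hdiffsubB : ∀ u, {w | G.Adj x w ∧ w ≠ u ∧ ¬ G.Adj u w} \ G.neighborSet z ⊆ B := by
    rintro u w ⟨⟨hxw, -, -⟩, hwz⟩
    exact ⟨hxw, fun hT => hwz hT.1⟩
  have hbelowfun : ∀ b ∈ B, {u | u ∈ T ∧ ¬ G.Adj u b}.ncard ≤ 2 := by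
    intro b hb
    have hxb : G.Adj x b := hb.1
    have hsub : {u | u ∈ T ∧ ¬ G.Adj u b} ⊆ {w | G.Adj x w ∧ w ≠ b ∧ ¬ G.Adj b w} := by
      rintro u ⟨hu, hnadj⟩
      refine ⟨hu.2, fun h => hb.2 (h ▸ hu), fun h => hnadj h.symm⟩
    calc {u | u ∈ T ∧ ¬ G.Adj u b}.ncard
        ≤ {w | G.Adj x w ∧ w ≠ b ∧ ¬ G.Adj b w}.ncard :=
          Set.ncard_le_ncard hsub (hNNfin b)
      _ = 2 := hregx b hxb
  rcases hd with hd | hd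
  · have hcase := bipartite_count hTfin hBfin (fun u b => ¬ G.Adj u b) (p := 2) (q := 2)
      (fun u hu => by
        have h1 := hkey u hu
        have h2 := hSuInt u hu
        have h3 := hNNprops u hu
        rw [hSuzcard, hd] at h2
        have hd2 : 2 ≤ ({w | G.Adj x w ∧ w ≠ u ∧ ¬ G.Adj u w} \ G.neighborSet z).ncard := by
          omega
        refine le_trans hd2 (Set.ncard_le_ncard ?_ (hBfin.subset (fun b hb => hb.1)))
        rintro w ⟨⟨hxw, hwu, huw⟩, hwz⟩
        exact ⟨hdiffsubB u ⟨⟨hxw, hwu, huw⟩, hwz⟩, huw⟩)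
      hbelowfun
    rw [hd, hBcard, hd] at hcase
    omega
  · have hcase := bipartite_count hTfin hBfin (fun u b => ¬ G.Adj u b) (p := 1) (q := 2)
      (fun u hu => by
        have h1 := hkey u hu
        have h2 := hSuInt u hu
        have h3 := hNNprops u hu
        rw [hSuzcard, hd] at h2
        have hd2 : 1 ≤ ({w | G.Adj x w ∧ w ≠ u ∧ ¬ G.Adj u w} \ G.neighborSet z).ncard := by
          omega
        refine le_trans hd2 (Set.ncard_le_ncard ?_ (hBfin.subset (fun b hb => hb.1)))
        rintro w ⟨⟨hxw, hwu, huw⟩, hwz⟩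
        exact ⟨hdiffsubB u ⟨⟨hxw, hwu, huw⟩, hwz⟩, huw⟩)
      hbelowfun
    rw [hd, hBcard, hd] at hcase
    omega


lemma suz_card (hcf : ClawFree G) (h7 : ¬ G.Colorable 6)
    (hDC : ∀ x y : V, G.Adj x y → ∃ c : V → Fin 5, PC G {x, y}ᶜ c)
    (hnb : ∀ v : V, ∃ w, G.Adj v w) {x z : V} (hGz : Good G z) (hxz : ¬ G.Adj x z) :
    (G.neighborSet z ∩ G.neighborSet x).ncard + (Su G x z).ncard = 8 := by
  classical
  obtain ⟨h8z, -, -⟩ := mainx hcf h7 hDC hnb hGz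
  have hNfinz : (G.neighborSet z).Finite := nbhd_finite hcf hDC hnb z
  have hpart : (G.neighborSet z ∩ insert x (G.neighborSet x)).ncard + (Su G x z).ncard
      = (G.neighborSet z).ncard :=
    Set.ncard_inter_add_ncard_diff_eq_ncard _ _ hNfinz
  have heq : G.neighborSet z ∩ insert x (G.neighborSet x)
      = G.neighborSet z ∩ G.neighborSet x := by
    ext w
    simp only [Set.mem_inter_iff, Set.mem_insert_iff]
    constructor
    · rintro ⟨hzw, rfl | hxw⟩
      · exact absurd (hzw : G.Adj z w).symm hxz
      · exact ⟨hzw, hxw⟩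
    · rintro ⟨hzw, hxw⟩
      exact ⟨hzw, Or.inr hxw⟩
  rw [heq, h8z] at hpart
  exact hpart

lemma no_good (hcf : ClawFree G) (h7 : ¬ G.Colorable 6)
    (hDC : ∀ x y : V, G.Adj x y → ∃ c : V → Fin 5, PC G {x, y}ᶜ c)
    (hnb : ∀ v : V, ∃ w, G.Adj v w) {x : V} (hx : Good G x) : False := by
  classical
  obtain ⟨h8, hregx, m, hm⟩ := mainx hcf h7 hDC hnb hx
  have hNfinx : (G.neighborSet x).Finite := nbhd_finite hcf hDC hnb x
  obtain ⟨u0, hu0⟩ : (G.neighborSet x).Nonempty := (Set.ncard_pos hNfinx).1 (by omega)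
  have hxu0 : G.Adj x u0 := hu0
  obtain ⟨-, -, hSu02, -⟩ := su_structure hcf h7 hDC hnb hx hxu0
  obtain ⟨z, hz⟩ : (Su G x u0).Nonempty := by
    have hfin : (Su G x u0).Finite :=
      (nbhd_finite hcf hDC hnb u0).subset (fun w hw => (mem_su.1 hw).1)
    exact (Set.ncard_pos hfin).1 (by omega)
  obtain ⟨hGz, hd5, hd7⟩ := z_structure hcf h7 hDC hnb hx hxu0 hz
  obtain ⟨hzu0, hzx, hxz⟩ := mem_su.1 hz
  have hd : (G.neighborSet z ∩ G.neighborSet x).ncard = 7 := by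
    rcases Nat.lt_or_ge (G.neighborSet z ∩ G.neighborSet x).ncard 7 with h | h
    · exfalso
      refine kill_small hcf h7 hDC hnb hx hxu0 hz ?_
      omega
    · omega
  have hNfinz : (G.neighborSet z).Finite := nbhd_finite hcf hDC hnb z
  set T := G.neighborSet z ∩ G.neighborSet x with hT
  have hTfin : T.Finite := hNfinz.inter_of_left _
  set B := G.neighborSet x \ T with hB
  have hBfin : B.Finite := hNfinx.diff
  have hBcard : B.ncard = 1 := by
    rw [hB, Set.ncard_diff (Set.inter_subset_right) hTfin, h8, hd]
  obtain ⟨b1, hb1⟩ := Set.ncard_eq_one.1 hBcard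
  have hb1B : b1 ∈ B := by rw [hb1]; rfl
  have hxb1 : G.Adj x b1 := hb1B.1
  -- Su x z is a single vertex t0
  have hSuz1 : (Su G x z).ncard = 1 := by
    have := suz_card hcf h7 hDC hnb hGz hxz
    rw [← hT] at this
    omega
  obtain ⟨t0, ht0⟩ := Set.ncard_eq_one.1 hSuz1
  have ht0mem : t0 ∈ Su G x z := by rw [ht0]; rfl
  obtain ⟨hzt0, ht0x, hxt0⟩ := mem_su.1 ht0mem
  -- the key equation, as in kill_small
  have hkey : ∀ u ∈ T, ({w | G.Adj x w ∧ w ≠ u ∧ ¬ G.Adj u w} ∩ G.neighborSet z).ncard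
      + (Su G x z \ Su G x u).ncard = 2 := by
    rintro u ⟨hzu, hxu⟩
    exact nz_split hcf h7 hDC hnb hGz hxz hzu hxu
  have hNNfin : ∀ u : V, {w | G.Adj x w ∧ w ≠ u ∧ ¬ G.Adj u w}.Finite :=
    fun u => hNfinx.subset (fun w hw => hw.1)
  have hNNprops : ∀ u ∈ T, ({w | G.Adj x w ∧ w ≠ u ∧ ¬ G.Adj u w} ∩ G.neighborSet z).ncard +
      ({w | G.Adj x w ∧ w ≠ u ∧ ¬ G.Adj u w} \ G.neighborSet z).ncard = 2 := by
    rintro u ⟨hzu, hxu⟩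
    have h := Set.ncard_inter_add_ncard_diff_eq_ncard
      {w | G.Adj x w ∧ w ≠ u ∧ ¬ G.Adj u w} (G.neighborSet z) (hNNfin u)
    rw [hregx u hxu] at h
    exact h
  -- the exceptional set F is small
  set F := T \ {u | t0 ∈ Su G x u} with hF
  have hFsub : F ⊆ {w | G.Adj x w ∧ w ≠ b1 ∧ ¬ G.Adj b1 w} := by
    rintro u ⟨huT, hut0⟩
    have h1 := hkey u huT
    have h2 := hNNprops u huT
    have hdiffeq : Su G x z \ Su G x u = {t0} := by
      rw [ht0]
      ext w
      simp only [Set.mem_diff, Set.mem_singleton_iff]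
      constructor
      · rintro ⟨h, -⟩; exact h
      · rintro rfl
        exact ⟨rfl, hut0⟩
    rw [hdiffeq, Set.ncard_singleton] at h1
    -- so the B-side part has exactly one element
    have hBside : ({w | G.Adj x w ∧ w ≠ u ∧ ¬ G.Adj u w} \ G.neighborSet z).ncard = 1 := by
      omega
    obtain ⟨w, hw⟩ := Set.ncard_eq_one.1 hBside
    have hwmem : w ∈ {w | G.Adj x w ∧ w ≠ u ∧ ¬ G.Adj u w} \ G.neighborSet z := by
      rw [hw]; rfl
    have hwB : w ∈ B := ⟨hwmem.1.1, fun hT' => hwmem.2 hT'.1⟩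
    have hwb1 : w = b1 := by
      rw [hb1] at hwB
      exact hwB
    refine ⟨huT.2, ?_, ?_⟩
    · intro h
      have : u ∈ B := h ▸ hb1B
      exact this.2 huT
    · intro h
      exact hwmem.1.2.2 (hwb1 ▸ h.symm)
  have hF2 : F.ncard ≤ 2 := by
    calc F.ncard ≤ {w | G.Adj x w ∧ w ≠ b1 ∧ ¬ G.Adj b1 w}.ncard :=
          Set.ncard_le_ncard hFsub (hNNfin b1)
      _ = 2 := hregx b1 hxb1
  set U := T ∩ {u | t0 ∈ Su G x u} with hU
  have hUfin : U.Finite := hTfin.inter_of_left _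
  have hpartT : U.ncard + F.ncard = T.ncard :=
    Set.ncard_inter_add_ncard_diff_eq_ncard T _ hTfin
  have hU5 : 5 ≤ U.ncard := by
    rw [hd] at hpartT
    omega
  -- t0 is good with d(t0) = 7
  obtain ⟨u1, hu1⟩ : U.Nonempty := by
    rw [← Set.ncard_pos hUfin]
    omega
  have hxu1 : G.Adj x u1 := hu1.1.2
  obtain ⟨hGt0, hdt05, hdt07⟩ := z_structure hcf h7 hDC hnb hx hxu1 hu1.2
  have hdt0 : (G.neighborSet t0 ∩ G.neighborSet x).ncard = 7 := by
    rcases Nat.lt_or_ge (G.neighborSet t0 ∩ G.neighborSet x).ncard 7 with h | h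
    · exfalso
      refine kill_small hcf h7 hDC hnb hx hxu1 hu1.2 ?_
      omega
    · omega
  -- Su x t0 = {z}
  have hSut01 : (Su G x t0).ncard = 1 := by
    have := suz_card hcf h7 hDC hnb hGt0 hxt0
    omega
  have hzSut0 : z ∈ Su G x t0 := mem_su.2 ⟨hzt0.symm, hzx, hxz⟩
  have hSut0eq : Su G x t0 = {z} := by
    obtain ⟨w, hw⟩ := Set.ncard_eq_one.1 hSut01
    rw [hw]
    rw [hw] at hzSut0
    rw [Set.mem_singleton_iff] at hzSut0
    rw [hzSut0]
  -- W = T ∩ N(t0) has 5 elements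
  obtain ⟨-, hregz, -⟩ := mainx hcf h7 hDC hnb hGz
  have hNZt0 : {w | G.Adj z w ∧ w ≠ t0 ∧ ¬ G.Adj t0 w}.ncard = 2 := hregz t0 hzt0
  have hTNsplit : (T ∩ G.neighborSet t0).ncard + (T \ G.neighborSet t0).ncard = 7 := by
    have := Set.ncard_inter_add_ncard_diff_eq_ncard T (G.neighborSet t0) hTfin
    rw [hd] at this
    exact this
  have hTdiffeq : T \ G.neighborSet t0 = {w | G.Adj z w ∧ w ≠ t0 ∧ ¬ G.Adj t0 w} := by
    ext w
    constructor
    · rintro ⟨⟨hzw, hxw⟩, hwt0⟩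
      exact ⟨hzw, fun h => hxt0 (h ▸ hxw), fun h => hwt0 h⟩
    · rintro ⟨hzw, hwt0, ht0w⟩
      have hwx : G.Adj x w := by
        by_contra hn
        have hmem : w ∈ Su G x z := mem_su.2 ⟨hzw, fun h => hxz (h ▸ hzw).symm, hn⟩
        rw [ht0, Set.mem_singleton_iff] at hmem
        exact hwt0 hmem
      exact ⟨⟨hzw, hwx⟩, fun h => ht0w (h : G.Adj t0 w)⟩
  have hW5 : (T ∩ G.neighborSet t0).ncard = 5 := by
    have hdiff2 : (T \ G.neighborSet t0).ncard = 2 := by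
      rw [hTdiffeq]; exact hNZt0
    omega
  have hUsubW : U ⊆ T ∩ G.neighborSet t0 := by
    rintro u ⟨huT, hut0⟩
    exact ⟨huT, ((mem_su.1 hut0).1).symm⟩
  have hWfin : (T ∩ G.neighborSet t0).Finite := hTfin.inter_of_left _
  have hUeqW : U = T ∩ G.neighborSet t0 :=
    Set.eq_of_subset_of_ncard_le hUsubW (by rw [hW5]; exact hU5) hWfin
  have hU5' : U.ncard = 5 := by rw [hUeqW, hW5]
  have hclosure : ∀ u ∈ U, ∀ w ∈ {w | G.Adj x w ∧ w ≠ u ∧ ¬ G.Adj u w}, w ∈ U := by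
    rintro u ⟨huT, hut0su⟩ w hw
    have hxu : G.Adj x u := huT.2
    have h1 := hkey u huT
    have hdiffempty : Su G x z \ Su G x u = ∅ := by
      rw [ht0, Set.diff_eq_empty, Set.singleton_subset_iff]
      exact hut0su
    rw [hdiffempty, Set.ncard_empty] at h1
    have hNN2 : {w' | G.Adj x w' ∧ w' ≠ u ∧ ¬ G.Adj u w'}.ncard = 2 := hregx u hxu
    have heqNN : {w' | G.Adj x w' ∧ w' ≠ u ∧ ¬ G.Adj u w'} ∩ G.neighborSet z
        = {w' | G.Adj x w' ∧ w' ≠ u ∧ ¬ G.Adj u w'} :=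
      Set.eq_of_subset_of_ncard_le Set.inter_subset_left (by omega) (hNNfin u)
    have h2 := nz_split hcf h7 hDC hnb hGt0 hxt0 ((mem_su.1 hut0su).1.symm) hxu
    have hdiffempty2 : Su G x t0 \ Su G x u = ∅ := by
      rw [hSut0eq, Set.diff_eq_empty, Set.singleton_subset_iff]
      exact mem_su.2 ⟨(huT.1 : G.Adj z u).symm, hzx, hxz⟩
    rw [hdiffempty2, Set.ncard_empty] at h2
    have heqNN2 : {w' | G.Adj x w' ∧ w' ≠ u ∧ ¬ G.Adj u w'} ∩ G.neighborSet t0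
        = {w' | G.Adj x w' ∧ w' ≠ u ∧ ¬ G.Adj u w'} :=
      Set.eq_of_subset_of_ncard_le Set.inter_subset_left (by omega) (hNNfin u)
    have hwNz : w ∈ G.neighborSet z := by
      have hmem : w ∈ {w' | G.Adj x w' ∧ w' ≠ u ∧ ¬ G.Adj u w'} ∩ G.neighborSet z := by
        rw [heqNN]; exact hw
      exact hmem.2
    have hwNt0 : w ∈ G.neighborSet t0 := by
      have hmem : w ∈ {w' | G.Adj x w' ∧ w' ≠ u ∧ ¬ G.Adj u w'} ∩ G.neighborSet t0 := by
        rw [heqNN2]; exact hw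
      exact hmem.2
    rw [hUeqW]
    exact ⟨⟨hwNz, hw.1⟩, hwNt0⟩
  have hmU : ∀ u ∈ U, m u ∈ U ∧ m u ≠ u ∧ m (m u) = u := by
    intro u hu
    have hxu : G.Adj x u := hu.1.2
    obtain ⟨hmadj, hmne, hmnadj, hminv⟩ := hm u hxu
    exact ⟨hclosure u hu (m u) ⟨hmadj, hmne, hmnadj⟩, hmne, hminv⟩
  have heven := even_aux m (U.ncard) U hUfin hmU rfl
  rw [hU5'] at heven
  exact (by decide : ¬ Even 5) heven


lemma lemE (hcf : ClawFree G) (h7 : ¬ G.Colorable 6)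
    (hDC : ∀ x y : V, G.Adj x y → ∃ c : V → Fin 5, PC G {x, y}ᶜ c)
    (hnb : ∀ v : V, ∃ w, G.Adj v w) (hng : ∀ x : V, ¬ Good G x)
    {x z : V} (hxz : ¬ G.Adj x z) (hne : z ≠ x) : False := by
  classical
  -- neighbourhoods of non-adjacent vertices coincide
  have hNsub : ∀ p q : V, ¬ G.Adj p q → q ≠ p → G.neighborSet q ⊆ G.neighborSet p := by
    intro p q hpq hqp e he
    by_contra hne'
    exact hng p ⟨q, e, (he : G.Adj q e), hpq, (fun h => hne' h), hqp,
      fun h => hpq ((h ▸ he) : G.Adj q p).symm⟩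
  -- no vertex has two distinct non-neighbours
  have huniq : ∀ w v u : V, v ≠ w → u ≠ w → v ≠ u → ¬ G.Adj w v → ¬ G.Adj w u → False := by
    intro w v u hvw huw hvu hwv hwu
    have hNv : G.neighborSet v = G.neighborSet w :=
      Set.Subset.antisymm
        (hNsub w v hwv hvw)
        (hNsub v w (fun h => hwv h.symm) (Ne.symm hvw))
    have hNu : G.neighborSet u = G.neighborSet w :=
      Set.Subset.antisymm
        (hNsub w u hwu huw)
        (hNsub u w (fun h => hwu h.symm) (Ne.symm huw))
    have hvu' : ¬ G.Adj v u := by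
      intro h
      have huv : u ∈ G.neighborSet v := h
      rw [hNv] at huv
      exact hwu huv
    obtain ⟨y, hy⟩ := hnb w
    have hyv : G.Adj y v := by
      have : y ∈ G.neighborSet v := by rw [hNv]; exact hy
      exact (this : G.Adj v y).symm
    have hyu : G.Adj y u := by
      have : y ∈ G.neighborSet u := by rw [hNu]; exact hy
      exact (this : G.Adj u y).symm
    exact no_indep_triple hcf hy.symm hyv hyu (Ne.symm hvw) (Ne.symm huw) hvu
      (fun h => hwv h) (fun h => hwu h) hvu'
  -- the "same or non-adjacent" relation is an equivalence
  let r : V → V → Prop := fun v w => v = w ∨ ¬ G.Adj v w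
  have hsymm : ∀ {v w}, r v w → r w v := by
    rintro v w (rfl | h)
    · exact Or.inl rfl
    · exact Or.inr (fun h' => h h'.symm)
  have htrans : ∀ {v w u}, r v w → r w u → r v u := by
    rintro v w u (rfl | h1) h2
    · exact h2
    · rcases h2 with rfl | h2
      · exact Or.inr h1
      · by_cases hvu : v = u
        · exact Or.inl hvu
        · by_cases hvw : v = w
          · exact Or.inr (hvw ▸ h2)
          · by_cases hwu : w = u
            · exact Or.inr (hwu ▸ h1)
            · exact (huniq w v u hvw (fun h => hwu h.symm) hvu
                (fun h => h1 h.symm) h2).elim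
  let s : Setoid V := ⟨r, ⟨fun v => Or.inl rfl, hsymm, htrans⟩⟩
  have hadjdiff : ∀ v w : V, ¬ (s.r v w) → G.Adj v w := by
    intro v w h
    by_contra hn
    exact h (Or.inr hn)
  by_cases h7c : ∃ f : Fin 7 → Quotient s, Function.Injective f
  · obtain ⟨f, hfinj⟩ := h7c
    obtain ⟨u, hxu⟩ := hnb x
    obtain ⟨c, hc⟩ := hDC x u hxu
    set I : Set (Fin 7) := {i | f i ≠ Quotient.mk s x ∧ f i ≠ Quotient.mk s u} with hI
    have hIcard : 5 ≤ I.ncard := by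
      have hIeq : I = Set.univ \ ({i | f i = Quotient.mk s x} ∪ {i | f i = Quotient.mk s u}) := by
        ext i
        simp only [hI, Set.mem_setOf_eq, Set.mem_diff, Set.mem_univ, Set.mem_union, true_and,
          not_or]
      have h1 : {i | f i = Quotient.mk s x}.ncard ≤ 1 := by
        rw [Set.ncard_le_one_iff (Set.toFinite _)]
        intro a b ha hb
        exact hfinj (ha.trans hb.symm)
      have h2 : {i | f i = Quotient.mk s u}.ncard ≤ 1 := by
        rw [Set.ncard_le_one_iff (Set.toFinite _)]
        intro a b ha hb
        exact hfinj (ha.trans hb.symm)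
      have hun : ({i | f i = Quotient.mk s x} ∪ {i | f i = Quotient.mk s u}).ncard ≤ 2 := by
        have := Set.ncard_union_le {i | f i = Quotient.mk s x} {i | f i = Quotient.mk s u}
        omega
      have hdiff := Set.ncard_diff
        (Set.subset_univ ({i | f i = Quotient.mk s x} ∪ {i | f i = Quotient.mk s u}))
        (Set.toFinite _)
      rw [← hIeq] at hdiff
      rw [hdiff, Set.ncard_univ]
      simp only [Nat.card_eq_fintype_card, Fintype.card_fin]
      omega
    set g : Fin 7 → V := fun i => (f i).out with hg
    have hgclass : ∀ i, Quotient.mk s (g i) = f i := fun i => Quotient.out_eq (f i)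
    have hzx : Quotient.mk s z = Quotient.mk s x :=
      Quotient.sound (Or.inr (fun h => hxz h.symm))
    set S : Set V := insert z (g '' I) with hS
    have hSadj : ∀ a ∈ S, ∀ b ∈ S, a ≠ b → G.Adj a b := by
      rintro a ha b hb hab
      rcases ha with rfl | ⟨i, hiI, rfl⟩
      · rcases hb with rfl | ⟨j, hjI, rfl⟩
        · exact absurd rfl hab
        · refine hadjdiff _ _ ?_
          intro hr
          have : Quotient.mk s a = Quotient.mk s (g j) := Quotient.sound hr
          rw [hzx, hgclass] at this
          exact hjI.1 this.symm
      · rcases hb with rfl | ⟨j, hjI, rfl⟩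
        · refine hadjdiff _ _ ?_
          intro hr
          have : Quotient.mk s (g i) = Quotient.mk s b := Quotient.sound hr
          rw [hzx] at this
          rw [hgclass] at this
          exact hiI.1 this
        · refine hadjdiff _ _ ?_
          intro hr
          have heq : Quotient.mk s (g i) = Quotient.mk s (g j) := Quotient.sound hr
          rw [hgclass, hgclass] at heq
          exact hab (congrArg Quotient.out heq)
    have hSsub : S ⊆ ({x, u}ᶜ : Set V) := by
      rintro a (rfl | ⟨i, hiI, rfl⟩)
      · refine mem_pairc.2 ⟨hne, fun h => ?_⟩
        exact hxz ((h ▸ hxu) : G.Adj x a).symm.symm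
      · refine mem_pairc.2 ⟨fun h => ?_, fun h => ?_⟩
        · exact hiI.1 (by rw [← hgclass i, h])
        · exact hiI.2 (by rw [← hgclass i, h])
    have hginj : Set.InjOn g I := by
      intro i hi j hj hij
      exact hfinj (by rw [← hgclass i, ← hgclass j, hij])
    have hzim : z ∉ g '' I := by
      rintro ⟨i, hiI, hgi⟩
      apply hiI.1
      rw [← hgclass i, hgi, hzx]
    have hScard : 6 ≤ S.ncard := by
      have him : (g '' I).ncard = I.ncard := Set.ncard_image_of_injOn hginj
      have hfinim : (g '' I).Finite := (Set.toFinite I).image g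
      rw [hS, Set.ncard_insert_of_notMem hzim hfinim, him]
      omega
    exact no_six_clique hc hSadj hSsub hScard
  · apply h7
    have hfinQ : Finite (Quotient s) := by
      by_contra hinf
      rw [not_finite_iff_infinite] at hinf
      refine h7c ⟨fun i => (Infinite.natEmbedding (Quotient s)) i, ?_⟩
      intro i j h
      have := (Infinite.natEmbedding (Quotient s)).injective h
      exact Fin.val_injective this
    have : Fintype (Quotient s) := Fintype.ofFinite _
    have hcard : Fintype.card (Quotient s) ≤ 6 := by
      by_contra hgt
      push_neg at hgt
      have h7le : Fintype.card (Fin 7) ≤ Fintype.card (Quotient s) := by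
        rw [Fintype.card_fin]
        omega
      obtain ⟨emb⟩ := Function.Embedding.nonempty_of_card_le h7le
      exact h7c ⟨emb, emb.injective⟩
    have hle : Fintype.card (Quotient s) ≤ Fintype.card (Fin 6) := by
      rw [Fintype.card_fin]
      exact hcard
    obtain ⟨emb⟩ := Function.Embedding.nonempty_of_card_le hle
    refine ⟨SimpleGraph.Coloring.mk (fun v => emb (Quotient.mk s v)) ?_⟩
    intro v w hadj h
    have hq := emb.injective h
    have hr : s.r v w := Quotient.exact hq
    rcases hr with rfl | hr
    · exact G.irrefl hadj
    · exact hr hadj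


end DC7

open DC7

theorem stmt_6 {V : Type*} (G : SimpleGraph V)
    (hG : DoubleCritical G 7) (hcf : ClawFree G) :
    Nonempty (G ≃g (⊤ : SimpleGraph (Fin 7))) := by
  classical
  obtain ⟨hconn, hchrom, hdc⟩ := hG
  have h7 : ¬ G.Colorable 6 := by
    intro h
    have hle := h.chromaticNumber_le
    rw [hchrom] at hle
    norm_num at hle
  have hDC : ∀ x y : V, G.Adj x y → ∃ c : V → Fin 5, PC G {x, y}ᶜ c := by
    intro x y hxy
    have hc := hdc x y hxy
    have h52 : ((7:ℕ) : ℕ∞) - 2 = ((5:ℕ) : ℕ∞) := by rfl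
    rw [h52] at hc
    have hcol : (G.induce ({x, y}ᶜ : Set V)).Colorable 5 :=
      SimpleGraph.chromaticNumber_le_iff_colorable.1 (le_of_eq hc)
    exact PC_of_colorable (by norm_num) hcol
  have hnb : ∀ v : V, ∃ w, G.Adj v w := by
    intro v
    by_cases hall : ∀ w : V, w = v
    · exfalso
      apply h7
      refine ⟨SimpleGraph.Coloring.mk (fun _ => 0) ?_⟩
      intro a b hab
      exact absurd ((hall a).trans (hall b).symm) hab.ne
    · push_neg at hall
      obtain ⟨w, hw⟩ := hall
      obtain ⟨p⟩ := hconn.preconnected v w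
      cases p with
      | nil => exact absurd rfl hw
      | cons h _ => exact ⟨_, h⟩
  by_cases hcomp : ∀ a b : V, a ≠ b → G.Adj a b
  · -- G is complete, and has exactly 7 vertices
    have hcol7 : G.Colorable 7 :=
      SimpleGraph.chromaticNumber_le_iff_colorable.1 (le_of_eq hchrom)
    obtain ⟨C⟩ := hcol7
    have hCinj : Function.Injective C := by
      intro v w h
      by_contra hne
      exact C.valid (hcomp v w hne) h
    haveI : Fintype V := Fintype.ofInjective C hCinj
    have hcardle : Fintype.card V ≤ 7 := by
      have := Fintype.card_le_of_injective C hCinj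
      simpa using this
    have hcardge : 7 ≤ Fintype.card V := by
      by_contra hlt
      push_neg at hlt
      have hle6 : Fintype.card V ≤ Fintype.card (Fin 6) := by
        rw [Fintype.card_fin]
        omega
      obtain ⟨emb⟩ := Function.Embedding.nonempty_of_card_le hle6
      apply h7
      refine ⟨SimpleGraph.Coloring.mk (fun v => emb v) ?_⟩
      intro a b hab h
      exact hab.ne (emb.injective h)
    have hcard : Fintype.card V = 7 := le_antisymm hcardle hcardge
    let e : V ≃ Fin 7 := Fintype.equivFinOfCardEq hcard
    refine ⟨⟨e, ?_⟩⟩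
    intro v w
    rw [SimpleGraph.top_adj]
    constructor
    · intro h
      exact hcomp v w (fun hvw => h (by rw [hvw]))
    · intro h heq
      exact h.ne (e.injective heq)
  · exfalso
    push_neg at hcomp
    obtain ⟨a, b, hab, hnadj⟩ := hcomp
    have hng : ∀ x : V, ¬ Good G x := fun x hx => no_good hcf h7 hDC hnb hx
    exact lemE hcf h7 hDC hnb hng hnadj (Ne.symm hab)
end

section
/- Let G be a graph, x a vertex of G with at least one non-neighbor, and suppose G \ N[x] is bipartite (possibly edgeless) and nonempty, and G is connected with χ(G) = t. If χ(G \ (V(H) ∪ {z})) ≤ t - 2 for an appropriate vertex z adjacent to both N(x) and H = G \ N[x] (as guaranteed for double-critical graphs), then χ(G) ≤ t - 1, a contradiction. Formally: if G is a connected graph with χ(G) = t such that χ(G \ {u,v}) = t - 2 for every edge uv, x has a non-neighbor, and G \ N[x] is 2-colorable, then a contradiction follows (i.e., G \ N[x] is not 2-colorable). -/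
open SimpleGraph

theorem stmt_17 {V : Type*} (G : SimpleGraph V) (t : ℕ)
    (hconn : G.Connected) (hchi : G.chromaticNumber = (t : ℕ∞))
    (hdc : ∀ u v : V, G.Adj u v →
      (G.induce ({u, v}ᶜ : Set V)).chromaticNumber = (t : ℕ∞) - 2)
    (x : V) (hx : ∃ y : V, y ≠ x ∧ ¬ G.Adj x y) :
    ¬ (G.induce ((insert x (G.neighborSet x))ᶜ : Set V)).Colorable 2 := by
  intro hcol
  obtain ⟨y, hyx, hxy⟩ := hx
  set S : Set V := insert x (G.neighborSet x) with hS
  have hxS : x ∈ S := Set.mem_insert _ _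
  have hyS : y ∉ S := by
    simp only [hS, Set.mem_insert_iff, mem_neighborSet]
    push_neg
    exact ⟨hyx, hxy⟩
  -- extract bounded nat colorings from double-criticality
  have getcol : ∀ u v : V, G.Adj u v →
      ∃ C : (G.induce ({u, v}ᶜ : Set V)).Coloring ℕ, ∀ w, C w < t - 2 := by
    intro u v huv
    have h := hdc u v huv
    have hle : (G.induce ({u, v}ᶜ : Set V)).chromaticNumber ≤ ((t - 2 : ℕ) : ℕ∞) := by
      rw [h, ENat.coe_sub]
      exact le_of_eq (by norm_cast)
    exact ((G.induce ({u, v}ᶜ : Set V)).colorable_iff_exists_bdd_nat_coloring _).mp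
      (chromaticNumber_le_iff_colorable.mp hle)
  -- the bipartition of Sᶜ
  obtain ⟨b, hb⟩ := ((G.induce (Sᶜ : Set V)).colorable_iff_exists_bdd_nat_coloring 2).mp hcol
  -- boundary dart
  obtain ⟨w⟩ := hconn.preconnected x y
  obtain ⟨d, _, hdS, hdnS⟩ := w.exists_boundary_dart S hxS hyS
  -- final contradiction helper
  have finish : G.Colorable (t - 1) → 3 ≤ t → False := by
    intro hcolG ht3
    have h1 := hcolG.chromaticNumber_le
    rw [hchi] at h1
    have h2 : t ≤ t - 1 := by exact_mod_cast h1
    omega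
  by_cases hHedge : ∃ p q : V, p ∉ S ∧ q ∉ S ∧ G.Adj p q
  · -- Case 1: Sᶜ has an edge p q
    obtain ⟨p, q, hp, hq, hpq⟩ := hHedge
    obtain ⟨c, hc⟩ := getcol p q hpq
    have hsub : ∀ v, v ∈ S → v ∈ ({p, q}ᶜ : Set V) := by
      intro v hv
      simp only [Set.mem_compl_iff, Set.mem_insert_iff, Set.mem_singleton_iff]
      push_neg
      constructor <;> rintro rfl
      · exact hp hv
      · exact hq hv
    have hxmem : x ∈ ({p, q}ᶜ : Set V) := hsub x hxS
    set cx : ℕ := c ⟨x, hxmem⟩ with hcx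
    have ht3 : 3 ≤ t := by have := hc ⟨x, hxmem⟩; omega
    -- key : neighbors of x get colors ≠ cx
    have key : ∀ v (hv : v ∈ S), v ≠ x → c ⟨v, hsub v hv⟩ ≠ cx := by
      intro v hv hvx
      have hadj : G.Adj x v := by
        rcases hv with h | h
        · exact absurd h hvx
        · exact h
      have : (G.induce ({p, q}ᶜ : Set V)).Adj ⟨x, hxmem⟩ ⟨v, hsub v hv⟩ := hadj
      exact (c.valid this).symm
    classical
    let f : V → ℕ := fun v =>
      if hv : v ∈ S then c ⟨v, hsub v hv⟩
      else if b ⟨v, hv⟩ = 0 then cx else t - 2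
    have hfval : ∀ u v : V, G.Adj u v → f u ≠ f v := by
      intro u v huv
      by_cases hu : u ∈ S <;> by_cases hv : v ∈ S
      · have : (G.induce ({p, q}ᶜ : Set V)).Adj ⟨u, hsub u hu⟩ ⟨v, hsub v hv⟩ := huv
        simpa [f, hu, hv] using c.valid this
      · -- u ∈ S, v ∉ S
        have hux : u ≠ x := by rintro rfl; exact hv (Set.mem_insert_iff.mpr (Or.inr huv))
        have h1 : c ⟨u, hsub u hu⟩ ≠ cx := key u hu hux
        have h2 : c ⟨u, hsub u hu⟩ < t - 2 := hc _
        simp only [f, dif_pos hu, dif_neg hv]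
        split <;> omega
      · have hvx : v ≠ x := by
          rintro rfl; exact hu (Set.mem_insert_iff.mpr (Or.inr huv.symm))
        have h1 : c ⟨v, hsub v hv⟩ ≠ cx := key v hv hvx
        have h2 : c ⟨v, hsub v hv⟩ < t - 2 := hc _
        simp only [f, dif_pos hv, dif_neg hu]
        split <;> omega
      · -- both outside S : bipartition
        have hadj : (G.induce (Sᶜ : Set V)).Adj ⟨u, hu⟩ ⟨v, hv⟩ := huv
        have hne := b.valid hadj
        have hu2 := hb ⟨u, hu⟩
        have hv2 := hb ⟨v, hv⟩
        have hcxlt : cx < t - 2 := hc _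
        simp only [f, dif_neg hu, dif_neg hv]
        split <;> split <;> omega
    have hcolG : G.Colorable (t - 1) := by
      rw [G.colorable_iff_exists_bdd_nat_coloring]
      refine ⟨Coloring.mk f fun a => hfval _ _ a, ?_⟩
      intro v
      change f v < t - 1
      by_cases hv : v ∈ S
      · have := hc ⟨v, hsub v hv⟩
        simp only [f, dif_pos hv]
        omega
      · have hcxlt : cx < t - 2 := hc _
        simp only [f, dif_neg hv]
        split <;> omega
    exact finish hcolG ht3
  · -- Case 2: Sᶜ is independent; use boundary dart z = d.fst ∈ N(x), h = d.snd ∉ S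
    push_neg at hHedge
    set z := d.fst with hz
    set h := d.snd with hh
    have hzh : G.Adj z h := d.adj
    have hzx : z ≠ x := by
      rintro rfl
      exact hdnS (Set.mem_insert_iff.mpr (Or.inr hzh))
    have hxz : G.Adj x z := by
      rcases hdS with h' | h'
      · exact absurd h' hzx
      · exact h'
    obtain ⟨c, hc⟩ := getcol z h hzh
    have hsub : ∀ v, v ∈ S → v ≠ z → v ∈ ({z, h}ᶜ : Set V) := by
      intro v hv hvz
      simp only [Set.mem_compl_iff, Set.mem_insert_iff, Set.mem_singleton_iff]
      push_neg
      exact ⟨hvz, by rintro rfl; exact hdnS hv⟩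
    have hxmem : x ∈ ({z, h}ᶜ : Set V) := hsub x hxS (Ne.symm hzx)
    set cx : ℕ := c ⟨x, hxmem⟩ with hcx
    have ht3 : 3 ≤ t := by have := hc ⟨x, hxmem⟩; omega
    have key : ∀ v (hv : v ∈ ({z, h}ᶜ : Set V)), v ∈ S → v ≠ x → c ⟨v, hv⟩ ≠ cx := by
      intro v hv hvS hvx
      have hadj : G.Adj x v := by
        rcases hvS with h' | h'
        · exact absurd h' hvx
        · exact h'
      have : (G.induce ({z, h}ᶜ : Set V)).Adj ⟨x, hxmem⟩ ⟨v, hv⟩ := hadj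
      exact (c.valid this).symm
    classical
    let f : V → ℕ := fun v =>
      if hvz : v = z then t - 2
      else if hv : v ∈ S then c ⟨v, hsub v hv hvz⟩ else cx
    have hfval : ∀ u v : V, G.Adj u v → f u ≠ f v := by
      intro u v huv
      by_cases huz : u = z <;> by_cases hvz : v = z
      · subst huz; subst hvz; exact absurd huv (G.irrefl)
      · -- u = z, v ≠ z
        simp only [f, dif_pos huz, dif_neg hvz]
        split
        · have := hc ⟨v, hsub v ‹_› hvz⟩; omega
        · have : cx < t - 2 := hc _; omega
      · simp only [f, dif_neg huz, dif_pos hvz]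
        split
        · have := hc ⟨u, hsub u ‹_› huz⟩; omega
        · have : cx < t - 2 := hc _; omega
      · simp only [f, dif_neg huz, dif_neg hvz]
        by_cases hu : u ∈ S <;> by_cases hv : v ∈ S
        · simp only [dif_pos hu, dif_pos hv]
          have : (G.induce ({z, h}ᶜ : Set V)).Adj ⟨u, hsub u hu huz⟩ ⟨v, hsub v hv hvz⟩ := huv
          exact c.valid this
        · simp only [dif_pos hu, dif_neg hv]
          have hux : u ≠ x := by
            rintro rfl; exact hv (Set.mem_insert_iff.mpr (Or.inr huv))
          exact key u (hsub u hu huz) hu hux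
        · simp only [dif_neg hu, dif_pos hv]
          have hvx : v ≠ x := by
            rintro rfl; exact hu (Set.mem_insert_iff.mpr (Or.inr huv.symm))
          exact fun e => key v (hsub v hv hvz) hv hvx e.symm
        · exact absurd huv (hHedge u v hu hv)
    have hcolG : G.Colorable (t - 1) := by
      rw [G.colorable_iff_exists_bdd_nat_coloring]
      refine ⟨Coloring.mk f fun a => hfval _ _ a, ?_⟩
      intro v
      change f v < t - 1
      by_cases hvz : v = z
      · simp only [f, dif_pos hvz]; omega
      · simp only [f, dif_neg hvz]
        by_cases hv : v ∈ S
        · simp only [dif_pos hv]; have := hc ⟨v, hsub v hv hvz⟩; omega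
        · simp only [dif_neg hv]; have : cx < t - 2 := hc _; omega
    exact finish hcolG ht3
end
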